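/- arXiv:2311.18283 — 7 statements merged into one kernel-verified Lean document; each statement's English description precedes it below -/
import Mathlib

section
/- Let 0 < α < 1, λ > 0, κ > 0, γ > 0 and M > 0. Let f : [0,∞) → [0,∞) be bounded and measurable, and let H : ℝ → ℝ be increasing and locally Lipschitz with H(x) = 0 for all x ≤ 0. Then there is at most one continuous function r : [0,M] → ℝ satisfying the impact Volterra equation r(t) = H(κ ∫₀ᵗ λ⁻¹ (t−s)^{−α} (γ f(s) − r(s)) ds) for all t ∈ [0,M]; that is, if r₁ and r₂ are two continuous solutions on [0,M], then r₁(t) = r₂(t) for all t ∈ [0,M]. -/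
open MeasureTheory Set Filter Topology

lemma ker_integrable {a : ℝ} (ha1 : a < 1) (t c b : ℝ) :
    IntervalIntegrable (fun s => (t - s) ^ (-a)) volume c b := by
  simpa using (intervalIntegral.intervalIntegrable_rpow' (a := t - c) (b := t - b)
    (r := -a) (by linarith)).comp_sub_left t

lemma ker_integral {a : ℝ} (ha1 : a < 1) {c t : ℝ} (h : c ≤ t) :
    ∫ s in c..t, (t - s) ^ (-a) = (t - c) ^ (1 - a) / (1 - a) := by
  rw [intervalIntegral.integral_comp_sub_left (fun x => x ^ (-a)) t]
  rw [sub_self]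
  rw [integral_rpow (Or.inl (by linarith))]
  rw [Real.zero_rpow (by intro hc; linarith [hc])]
  norm_num
  ring_nf

lemma locLip_Icc {f : ℝ → ℝ} (hf : LocallyLipschitz f) (a b : ℝ) :
    ∃ K : ℝ, 0 ≤ K ∧ ∀ x ∈ Icc a b, ∀ y ∈ Icc a b, |f x - f y| ≤ K * |x - y| := by
  rcases le_or_gt b a with hba | hab
  · rcases eq_or_lt_of_le hba with h | h
    · exact ⟨0, le_rfl, by
        subst h
        rintro x hx y hy
        have : x = y := le_antisymm (hx.2.trans hy.1) (hy.2.trans hx.1)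
        simp [this]⟩
    · exact ⟨0, le_rfl, fun x hx => absurd (hx.1.trans hx.2) (not_le.2 h)⟩
  set S : Set ℝ := {t | t ∈ Icc a b ∧
    ∃ K : ℝ, 0 ≤ K ∧ ∀ x ∈ Icc a t, ∀ y ∈ Icc a t, |f x - f y| ≤ K * |x - y|} with hS
  have haS : a ∈ S := by
    refine ⟨⟨le_rfl, hab.le⟩, 0, le_rfl, ?_⟩
    intro x hx y hy
    have hx' : x = a := le_antisymm hx.2 hx.1
    have hy' : y = a := le_antisymm hy.2 hy.1
    simp [hx', hy']
  have hbdd : BddAbove S := ⟨b, fun t ht => ht.1.2⟩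
  have hne : S.Nonempty := ⟨a, haS⟩
  set T := sSup S with hT
  have haT : a ≤ T := le_csSup hbdd haS
  have hTb : T ≤ b := csSup_le hne fun t ht => ht.1.2
  obtain ⟨K₀, U, hU, hlip⟩ := hf T
  obtain ⟨ε, hε, hball⟩ := Metric.mem_nhds_iff.1 hU
  have hK₀ : ∀ x ∈ Metric.ball T ε, ∀ y ∈ Metric.ball T ε, |f x - f y| ≤ K₀ * |x - y| := by
    intro x hx y hy
    have := (lipschitzOnWith_iff_dist_le_mul.1 (hlip.mono hball)) x hx y hy
    simpa [Real.dist_eq] using this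
  obtain ⟨t₁, ht₁S, ht₁⟩ : ∃ t₁ ∈ S, T - ε / 2 < t₁ :=
    exists_lt_of_lt_csSup hne (by linarith)
  have ht₁T : t₁ ≤ T := le_csSup hbdd ht₁S
  obtain ⟨K₁, hK₁0, hK₁⟩ := ht₁S.2
  set T' := min (T + ε / 2) b with hT'
  set K : ℝ := max K₁ K₀ with hKdef
  have hKK₁ : K₁ ≤ K := le_max_left _ _
  have hKK₀ : (K₀ : ℝ) ≤ K := le_max_right _ _
  have hK0 : (0:ℝ) ≤ K := hK₁0.trans hKK₁
  have key : ∀ x ∈ Icc a T', ∀ y ∈ Icc a T', x ≤ y → |f x - f y| ≤ K * |x - y| := by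
    intro x hx y hy hxy
    have hT'b : T' ≤ b := min_le_right _ _
    have hT'e : T' ≤ T + ε / 2 := min_le_left _ _
    have habs : |x - y| = y - x := by rw [abs_sub_comm, abs_of_nonneg (by linarith)]
    rcases le_or_gt y t₁ with hyt | hyt
    · have := hK₁ x ⟨hx.1, hxy.trans hyt⟩ y ⟨hy.1, hyt⟩
      calc |f x - f y| ≤ K₁ * |x - y| := this
        _ ≤ K * |x - y| := by apply mul_le_mul_of_nonneg_right hKK₁ (abs_nonneg _)
    · have hyball : y ∈ Metric.ball T ε := by
        rw [Metric.mem_ball, Real.dist_eq, abs_lt]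
        constructor <;> [linarith [hy.2, ht₁.trans hyt]; linarith [hy.2]]
      rcases le_or_gt t₁ x with hxt | hxt
      · have hxball : x ∈ Metric.ball T ε := by
          rw [Metric.mem_ball, Real.dist_eq, abs_lt]
          constructor <;> [linarith [ht₁.trans_le hxt]; linarith [hxy, hy.2]]
        calc |f x - f y| ≤ K₀ * |x - y| := hK₀ x hxball y hyball
          _ ≤ K * |x - y| := mul_le_mul_of_nonneg_right hKK₀ (abs_nonneg _)
      · have ht₁ball : t₁ ∈ Metric.ball T ε := by
          rw [Metric.mem_ball, Real.dist_eq, abs_lt]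
          constructor <;> [linarith; linarith [ht₁T]]
        have h1 : |f x - f t₁| ≤ K₁ * (t₁ - x) := by
          have h := hK₁ x ⟨hx.1, hxt.le⟩ t₁ ⟨hx.1.trans hxt.le, le_rfl⟩
          have e : |x - t₁| = t₁ - x := by
            rw [abs_sub_comm]; exact abs_of_nonneg (by linarith)
          rwa [e] at h
        have h2 : |f t₁ - f y| ≤ (K₀ : ℝ) * (y - t₁) := by
          have h := hK₀ t₁ ht₁ball y hyball
          have e : |t₁ - y| = y - t₁ := by
            rw [abs_sub_comm]; exact abs_of_nonneg (by linarith)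
          rwa [e] at h
        calc |f x - f y| = |(f x - f t₁) + (f t₁ - f y)| := by ring_nf
          _ ≤ |f x - f t₁| + |f t₁ - f y| := abs_add_le _ _
          _ ≤ K₁ * (t₁ - x) + K₀ * (y - t₁) := add_le_add h1 h2
          _ ≤ K * (t₁ - x) + K * (y - t₁) := by
              have a1 : K₁ * (t₁ - x) ≤ K * (t₁ - x) :=
                mul_le_mul_of_nonneg_right hKK₁ (by linarith)
              have a2 : (K₀ : ℝ) * (y - t₁) ≤ K * (y - t₁) :=
                mul_le_mul_of_nonneg_right hKK₀ (by linarith)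
              linarith
          _ = K * |x - y| := by rw [habs]; ring
  have hT'S : T' ∈ S := by
    refine ⟨⟨le_trans haT (le_min (by linarith) hTb), min_le_right _ _⟩, K, hK0, ?_⟩
    intro x hx y hy
    rcases le_total x y with h | h
    · exact key x hx y hy h
    · rw [abs_sub_comm (f x), abs_sub_comm x]
      exact key y hy x hx h
  have hT'T : T' ≤ T := le_csSup hbdd hT'S
  have hbT : b ≤ T := by
    by_contra hb
    push_neg at hb
    have : T' = T + ε / 2 ∨ T' = b := min_cases _ _ |>.imp (fun h => h.1) (fun h => h.1)
    rcases this with h | h <;> [linarith [hT'T, h ▸ hT'T]; linarith [h ▸ hT'T]]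
  have hTb' : T = b := le_antisymm hTb hbT
  have hT'eq : T' = b := by rw [hT', hTb']; exact min_eq_right (by linarith)
  obtain ⟨_, K', hK'0, hK'⟩ := hT'S
  exact ⟨K', hK'0, by rwa [hT'eq] at hK'⟩

/-- Uniqueness of continuous solutions of the impact Volterra equation
`r(t) = H(κ ∫₀ᵗ λ⁻¹ (t−s)^(−α) (γ f(s) − r(s)) ds)` on `[0, M]`. -/
theorem stmt_0
    (α lam κ γ M : ℝ) (hα0 : 0 < α) (hα1 : α < 1) (hlam : 0 < lam)
    (hκ : 0 < κ) (hγ : 0 < γ) (hM : 0 < M)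
    (f : ℝ → ℝ) (hf_meas : Measurable f)
    (hf_nonneg : ∀ t, 0 ≤ t → 0 ≤ f t)
    (hf_bdd : ∃ C, ∀ t, 0 ≤ t → f t ≤ C)
    (H : ℝ → ℝ) (hH_mono : Monotone H) (hH_lip : LocallyLipschitz H)
    (hH_zero : ∀ x, x ≤ 0 → H x = 0)
    (r₁ r₂ : ℝ → ℝ)
    (hr₁_cont : ContinuousOn r₁ (Icc 0 M))
    (hr₂_cont : ContinuousOn r₂ (Icc 0 M))
    (hr₁ : ∀ t ∈ Icc (0:ℝ) M,
      r₁ t = H (κ * ∫ s in (0:ℝ)..t, lam⁻¹ * (t - s) ^ (-α) * (γ * f s - r₁ s)))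
    (hr₂ : ∀ t ∈ Icc (0:ℝ) M,
      r₂ t = H (κ * ∫ s in (0:ℝ)..t, lam⁻¹ * (t - s) ^ (-α) * (γ * f s - r₂ s))) :
    ∀ t ∈ Icc (0:ℝ) M, r₁ t = r₂ t := by
  have h1α : (0:ℝ) < 1 - α := by linarith
  obtain ⟨C, hC⟩ := hf_bdd
  obtain ⟨B₁, hB₁⟩ :=
    (isCompact_Icc : IsCompact (Icc (0:ℝ) M)).exists_bound_of_continuousOn hr₁_cont
  obtain ⟨B₂, hB₂⟩ :=
    (isCompact_Icc : IsCompact (Icc (0:ℝ) M)).exists_bound_of_continuousOn hr₂_cont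
  set B : ℝ := γ * max C 0 + max B₁ B₂ + 1 with hBdef
  have hB₁0 : (0:ℝ) ≤ B₁ := le_trans (norm_nonneg _) (hB₁ 0 ⟨le_rfl, hM.le⟩)
  have hB0 : (0:ℝ) < B := by
    have h1 : 0 ≤ γ * max C 0 := mul_nonneg hγ.le (le_max_right _ _)
    have h2 : B₁ ≤ max B₁ B₂ := le_max_left _ _
    simp only [hBdef]; linarith
  have hbd₁ : ∀ s ∈ Icc (0:ℝ) M, |γ * f s - r₁ s| ≤ B := by
    intro s hs
    have h1 : |γ * f s| ≤ γ * max C 0 := by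
      rw [abs_of_nonneg (mul_nonneg hγ.le (hf_nonneg s hs.1))]
      exact mul_le_mul_of_nonneg_left (le_trans (hC s hs.1) (le_max_left _ _)) hγ.le
    have h2 : |r₁ s| ≤ max B₁ B₂ := le_trans (le_of_eq (Real.norm_eq_abs _).symm)
      (le_trans (hB₁ s hs) (le_max_left _ _))
    have := abs_sub (γ * f s) (r₁ s)
    simp only [hBdef]; linarith
  have hbd₂ : ∀ s ∈ Icc (0:ℝ) M, |γ * f s - r₂ s| ≤ B := by
    intro s hs
    have h1 : |γ * f s| ≤ γ * max C 0 := by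
      rw [abs_of_nonneg (mul_nonneg hγ.le (hf_nonneg s hs.1))]
      exact mul_le_mul_of_nonneg_left (le_trans (hC s hs.1) (le_max_left _ _)) hγ.le
    have h2 : |r₂ s| ≤ max B₁ B₂ := le_trans (le_of_eq (Real.norm_eq_abs _).symm)
      (le_trans (hB₂ s hs) (le_max_right _ _))
    have := abs_sub (γ * f s) (r₂ s)
    simp only [hBdef]; linarith
  have hker_meas : ∀ t : ℝ, Measurable (fun s : ℝ => (t - s) ^ (-α)) := by
    intro t; fun_prop
  -- generic integrability
  have hint : ∀ (ρ : ℝ → ℝ) (Bρ : ℝ), AEStronglyMeasurable ρ (volume.restrict (Icc 0 M)) →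
      (∀ s ∈ Icc (0:ℝ) M, |ρ s| ≤ Bρ) → ∀ t ∈ Icc (0:ℝ) M,
      IntervalIntegrable (fun s => (t - s) ^ (-α) * ρ s) volume 0 t := by
    intro ρ Bρ hmeas hbd t ht
    rw [intervalIntegrable_iff_integrableOn_Ioc_of_le ht.1]
    have hker : IntegrableOn (fun s => (t - s) ^ (-α)) (Ioc 0 t) volume :=
      (intervalIntegrable_iff_integrableOn_Ioc_of_le ht.1).1 (ker_integrable hα1 t 0 t)
    have hmeas' : AEStronglyMeasurable ρ (volume.restrict (Ioc 0 t)) :=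
      hmeas.mono_measure (Measure.restrict_mono
        (Ioc_subset_Icc_self.trans (Icc_subset_Icc le_rfl ht.2)) le_rfl)
    refine Integrable.mono' (hker.const_mul Bρ)
      (((hker_meas t).aestronglyMeasurable).mul hmeas') ?_
    filter_upwards [ae_restrict_mem measurableSet_Ioc] with s hs
    have h1 : 0 ≤ (t - s) ^ (-α) := Real.rpow_nonneg (by linarith [hs.2]) _
    have h2 : |ρ s| ≤ Bρ := hbd s ⟨hs.1.le, hs.2.trans ht.2⟩
    calc ‖(t - s) ^ (-α) * ρ s‖ = (t - s) ^ (-α) * |ρ s| := by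
          rw [Real.norm_eq_abs, abs_mul, abs_of_nonneg h1]
      _ ≤ Bρ * (t - s) ^ (-α) := by
          rw [mul_comm]; exact mul_le_mul_of_nonneg_right h2 h1
  have hmeas₁ : AEStronglyMeasurable (fun s => γ * f s - r₁ s) (volume.restrict (Icc 0 M)) :=
    ((hf_meas.const_mul γ).aestronglyMeasurable).sub
      (hr₁_cont.aestronglyMeasurable measurableSet_Icc)
  have hmeas₂ : AEStronglyMeasurable (fun s => γ * f s - r₂ s) (volume.restrict (Icc 0 M)) :=
    ((hf_meas.const_mul γ).aestronglyMeasurable).sub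
      (hr₂_cont.aestronglyMeasurable measurableSet_Icc)
  have hmeasΔ : AEStronglyMeasurable (fun s => |r₁ s - r₂ s|) (volume.restrict (Icc 0 M)) :=
    ((hr₁_cont.sub hr₂_cont).abs).aestronglyMeasurable measurableSet_Icc
  have hbdΔ : ∀ s ∈ Icc (0:ℝ) M, |r₁ s - r₂ s| ≤ B₁ + B₂ := by
    intro s hs
    have h1 : |r₁ s| ≤ B₁ := le_trans (le_of_eq (Real.norm_eq_abs _).symm) (hB₁ s hs)
    have h2 : |r₂ s| ≤ B₂ := le_trans (le_of_eq (Real.norm_eq_abs _).symm) (hB₂ s hs)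
    have := abs_sub (r₁ s) (r₂ s)
    linarith
  have hI₁ := hint _ B hmeas₁ hbd₁
  have hI₂ := hint _ B hmeas₂ hbd₂
  have hIΔ := hint _ (B₁ + B₂) hmeasΔ (by
    intro s hs; rw [abs_abs]; exact hbdΔ s hs)
  -- pull out lam⁻¹
  have hpull : ∀ (ρ : ℝ → ℝ) (t : ℝ),
      (∫ s in (0:ℝ)..t, lam⁻¹ * (t - s) ^ (-α) * ρ s)
        = lam⁻¹ * ∫ s in (0:ℝ)..t, (t - s) ^ (-α) * ρ s := by
    intro ρ t
    rw [← intervalIntegral.integral_const_mul]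
    congr 1; funext s; ring
  -- bound on the argument of H
  set R : ℝ := κ * (lam⁻¹ * (B * (M ^ (1 - α) / (1 - α)))) with hRdef
  have hxbound : ∀ (ρ : ℝ → ℝ),
      (∀ t ∈ Icc (0:ℝ) M, IntervalIntegrable (fun s => (t - s) ^ (-α) * ρ s) volume 0 t) →
      (∀ s ∈ Icc (0:ℝ) M, |ρ s| ≤ B) → ∀ t ∈ Icc (0:ℝ) M,
      |κ * ∫ s in (0:ℝ)..t, lam⁻¹ * (t - s) ^ (-α) * ρ s| ≤ R := by
    intro ρ hIρ hbd t ht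
    rw [hpull]
    have habs : |∫ s in (0:ℝ)..t, (t - s) ^ (-α) * ρ s|
        ≤ ∫ s in (0:ℝ)..t, |(t - s) ^ (-α) * ρ s| :=
      intervalIntegral.abs_integral_le_integral_abs ht.1
    have hmono : (∫ s in (0:ℝ)..t, |(t - s) ^ (-α) * ρ s|)
        ≤ ∫ s in (0:ℝ)..t, B * (t - s) ^ (-α) := by
      refine intervalIntegral.integral_mono_on ht.1 (hIρ t ht).abs
        ((ker_integrable hα1 t 0 t).const_mul B) ?_
      intro s hs
      have h1 : 0 ≤ (t - s) ^ (-α) := Real.rpow_nonneg (by linarith [hs.2]) _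
      calc |(t - s) ^ (-α) * ρ s| = (t - s) ^ (-α) * |ρ s| := by
            rw [abs_mul, abs_of_nonneg h1]
        _ ≤ B * (t - s) ^ (-α) := by
            rw [mul_comm]
            exact mul_le_mul_of_nonneg_right (hbd s ⟨hs.1, hs.2.trans ht.2⟩) h1
    have hval : (∫ s in (0:ℝ)..t, B * (t - s) ^ (-α))
        = B * (t ^ (1 - α) / (1 - α)) := by
      rw [intervalIntegral.integral_const_mul, ker_integral hα1 ht.1, sub_zero]
    have hM' : t ^ (1 - α) ≤ M ^ (1 - α) := Real.rpow_le_rpow ht.1 ht.2 h1α.le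
    have hIle : (∫ s in (0:ℝ)..t, (t - s) ^ (-α) * ρ s) ≤ B * (M ^ (1 - α) / (1 - α)) ∧
        -(B * (M ^ (1 - α) / (1 - α))) ≤ ∫ s in (0:ℝ)..t, (t - s) ^ (-α) * ρ s := by
      have h3 : B * (t ^ (1 - α) / (1 - α)) ≤ B * (M ^ (1 - α) / (1 - α)) := by
        gcongr
      constructor
      · calc (∫ s in (0:ℝ)..t, (t - s) ^ (-α) * ρ s)
            ≤ |∫ s in (0:ℝ)..t, (t - s) ^ (-α) * ρ s| := le_abs_self _
          _ ≤ ∫ s in (0:ℝ)..t, |(t - s) ^ (-α) * ρ s| := habs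
          _ ≤ B * (t ^ (1 - α) / (1 - α)) := hval ▸ hmono
          _ ≤ _ := h3
      · have := neg_abs_le (∫ s in (0:ℝ)..t, (t - s) ^ (-α) * ρ s)
        have h4 : |∫ s in (0:ℝ)..t, (t - s) ^ (-α) * ρ s| ≤ B * (M ^ (1 - α) / (1 - α)) :=
          le_trans habs (le_trans (hval ▸ hmono) h3)
        linarith
    rw [abs_mul, abs_of_pos hκ, abs_mul, abs_of_pos (inv_pos.2 hlam), hRdef]
    apply mul_le_mul_of_nonneg_left _ hκ.le
    apply mul_le_mul_of_nonneg_left _ (inv_pos.2 hlam).le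
    rw [abs_le]
    exact ⟨hIle.2, hIle.1⟩
  obtain ⟨K, hK0, hK⟩ := locLip_Icc hH_lip (-R) R
  -- key inequality
  have key : ∀ t ∈ Icc (0:ℝ) M, |r₁ t - r₂ t|
      ≤ K * (κ * lam⁻¹) * ∫ s in (0:ℝ)..t, (t - s) ^ (-α) * |r₁ s - r₂ s| := by
    intro t ht
    set x₁ := κ * ∫ s in (0:ℝ)..t, lam⁻¹ * (t - s) ^ (-α) * (γ * f s - r₁ s) with hx₁
    set x₂ := κ * ∫ s in (0:ℝ)..t, lam⁻¹ * (t - s) ^ (-α) * (γ * f s - r₂ s) with hx₂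
    have hm₁ : x₁ ∈ Icc (-R) R :=
      mem_Icc.2 (abs_le.1 (hxbound _ hI₁ hbd₁ t ht))
    have hm₂ : x₂ ∈ Icc (-R) R :=
      mem_Icc.2 (abs_le.1 (hxbound _ hI₂ hbd₂ t ht))
    have hsub : x₁ - x₂ = κ * lam⁻¹ *
        ∫ s in (0:ℝ)..t, (t - s) ^ (-α) * (r₂ s - r₁ s) := by
      rw [hx₁, hx₂, hpull, hpull, ← mul_sub, ← mul_sub,
        ← intervalIntegral.integral_sub (hI₁ t ht) (hI₂ t ht)]
      rw [mul_assoc]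
      congr 2
      exact intervalIntegral.integral_congr fun s _ => by ring
    have habs0 : |∫ s in (0:ℝ)..t, (t - s) ^ (-α) * (r₂ s - r₁ s)|
        ≤ ∫ s in (0:ℝ)..t, (t - s) ^ (-α) * |r₁ s - r₂ s| := by
      refine le_trans (intervalIntegral.abs_integral_le_integral_abs ht.1) (le_of_eq ?_)
      apply intervalIntegral.integral_congr
      intro s hs
      rw [uIcc_of_le ht.1] at hs
      have h1 : 0 ≤ (t - s) ^ (-α) := Real.rpow_nonneg (by linarith [hs.2]) _
      simp only [abs_mul, abs_of_nonneg h1, abs_sub_comm (r₂ s)]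
    rw [hr₁ t ht, hr₂ t ht]
    calc |H x₁ - H x₂| ≤ K * |x₁ - x₂| := hK x₁ hm₁ x₂ hm₂
      _ ≤ K * (κ * lam⁻¹ * ∫ s in (0:ℝ)..t, (t - s) ^ (-α) * |r₁ s - r₂ s|) := by
          apply mul_le_mul_of_nonneg_left _ hK0
          rw [hsub, abs_mul, abs_of_pos (by positivity : (0:ℝ) < κ * lam⁻¹)]
          exact mul_le_mul_of_nonneg_left habs0 (by positivity)
      _ = K * (κ * lam⁻¹) * ∫ s in (0:ℝ)..t, (t - s) ^ (-α) * |r₁ s - r₂ s| := by ring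
  -- value at 0
  have h0 : r₁ 0 = r₂ 0 := by
    rw [hr₁ 0 ⟨le_rfl, hM.le⟩, hr₂ 0 ⟨le_rfl, hM.le⟩]
    simp [intervalIntegral.integral_same]
  -- the set of times up to which the solutions agree
  set Z : Set ℝ := {t | t ∈ Icc 0 M ∧ ∀ s ∈ Icc (0:ℝ) t, r₁ s = r₂ s} with hZ
  have h0Z : 0 ∈ Z := ⟨⟨le_rfl, hM.le⟩, by
    intro s hs
    have : s = 0 := le_antisymm hs.2 hs.1
    rw [this]; exact h0⟩
  have hZbdd : BddAbove Z := ⟨M, fun t ht => ht.1.2⟩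
  have hZne : Z.Nonempty := ⟨0, h0Z⟩
  set T := sSup Z with hTdef
  have hT0 : 0 ≤ T := le_csSup hZbdd h0Z
  have hTM : T ≤ M := csSup_le hZne fun t ht => ht.1.2
  have hltT : ∀ s, 0 ≤ s → s < T → r₁ s = r₂ s := by
    intro s hs0 hsT
    obtain ⟨t', ht'Z, hst'⟩ := exists_lt_of_lt_csSup hZne hsT
    exact ht'Z.2 s ⟨hs0, hst'.le⟩
  have hTzero : ∀ s ∈ Icc (0:ℝ) T, r₁ s = r₂ s := by
    intro s hs
    rcases lt_or_eq_of_le hs.2 with h | h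
    · exact hltT s hs.1 h
    · rw [h]
      rcases eq_or_lt_of_le hT0 with h0T | h0T
      · rw [← h0T]; exact h0
      · have hg : ContinuousWithinAt (fun u => r₁ u - r₂ u) (Icc 0 M) T :=
          (hr₁_cont.sub hr₂_cont) T ⟨hT0, hTM⟩
        have hsub : Ico (0:ℝ) T ⊆ Icc 0 M := fun x hx => ⟨hx.1, hx.2.le.trans hTM⟩
        have hne' : (𝓝[Ico (0:ℝ) T] T).NeBot := by
          rw [← mem_closure_iff_nhdsWithin_neBot, closure_Ico h0T.ne]
          exact ⟨hT0, le_rfl⟩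
        have h1 : Tendsto (fun u => r₁ u - r₂ u) (𝓝[Ico (0:ℝ) T] T) (𝓝 (r₁ T - r₂ T)) :=
          hg.tendsto.mono_left (nhdsWithin_mono _ hsub)
        have h2 : Tendsto (fun u => r₁ u - r₂ u) (𝓝[Ico (0:ℝ) T] T) (𝓝 0) := by
          apply Tendsto.congr' _ tendsto_const_nhds
          filter_upwards [self_mem_nhdsWithin] with x hx
          exact (sub_eq_zero.2 (hltT x hx.1 hx.2)).symm
        exact sub_eq_zero.1 (tendsto_nhds_unique h1 h2)
  rcases eq_or_lt_of_le hTM with hTM' | hTM'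
  · intro t ht; exact hTzero t ⟨ht.1, ht.2.trans_eq hTM'.symm⟩
  · exfalso
    set A : ℝ := K * (κ * lam⁻¹) + 1 with hAdef
    have hKA : K * (κ * lam⁻¹) ≤ A := by simp only [hAdef]; linarith
    have hA0 : 0 < A := by
      have : 0 ≤ K * (κ * lam⁻¹) := mul_nonneg hK0 (by positivity)
      simp only [hAdef]; linarith
    set δ : ℝ := ((1 - α) / (2 * A)) ^ (1 - α)⁻¹ with hδdef
    have hδ0 : 0 < δ := Real.rpow_pos_of_pos (by positivity) _
    have hδval : δ ^ (1 - α) = (1 - α) / (2 * A) :=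
      Real.rpow_inv_rpow (by positivity) (by linarith)
    set t₀ := min (T + δ) M with ht₀def
    have hTt₀ : T < t₀ := lt_min (by linarith) hTM'
    have ht₀M : t₀ ≤ M := min_le_right _ _
    have ht₀Tδ : t₀ ≤ T + δ := min_le_left _ _
    have hsubset : Icc T t₀ ⊆ Icc 0 M := fun x hx => ⟨hT0.trans hx.1, hx.2.trans ht₀M⟩
    obtain ⟨u, huI, humax⟩ := isCompact_Icc.exists_isMaxOn ⟨T, left_mem_Icc.2 hTt₀.le⟩
      (((hr₁_cont.sub hr₂_cont).abs).mono hsubset)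
    have huM : u ∈ Icc (0:ℝ) M := hsubset huI
    set D := |r₁ u - r₂ u| with hD
    have hD0 : 0 ≤ D := abs_nonneg _
    have hIu : IntervalIntegrable (fun s => (u - s) ^ (-α) * |r₁ s - r₂ s|) volume 0 u :=
      hIΔ u huM
    have hIu1 : IntervalIntegrable (fun s => (u - s) ^ (-α) * |r₁ s - r₂ s|) volume 0 T :=
      hIu.mono_set (by
        rw [uIcc_of_le hT0, uIcc_of_le huM.1]
        exact Icc_subset_Icc le_rfl huI.1)
    have hIu2 : IntervalIntegrable (fun s => (u - s) ^ (-α) * |r₁ s - r₂ s|) volume T u :=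
      hIu.mono_set (by
        rw [uIcc_of_le huI.1, uIcc_of_le huM.1]
        exact Icc_subset_Icc hT0 le_rfl)
    have hsplit : (∫ s in (0:ℝ)..u, (u - s) ^ (-α) * |r₁ s - r₂ s|)
        = (∫ s in (0:ℝ)..T, (u - s) ^ (-α) * |r₁ s - r₂ s|)
          + ∫ s in T..u, (u - s) ^ (-α) * |r₁ s - r₂ s| :=
      (intervalIntegral.integral_add_adjacent_intervals hIu1 hIu2).symm
    have hz1 : (∫ s in (0:ℝ)..T, (u - s) ^ (-α) * |r₁ s - r₂ s|) = 0 := by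
      rw [intervalIntegral.integral_congr (g := fun _ => (0:ℝ))]
      · simp
      · intro s hs
        rw [uIcc_of_le hT0] at hs
        simp [sub_eq_zero.2 (hTzero s hs)]
    have hest2 : (∫ s in T..u, (u - s) ^ (-α) * |r₁ s - r₂ s|)
        ≤ ((u - T) ^ (1 - α) / (1 - α)) * D := by
      have hval : (∫ s in T..u, (u - s) ^ (-α) * D)
          = ((u - T) ^ (1 - α) / (1 - α)) * D := by
        rw [intervalIntegral.integral_mul_const, ker_integral hα1 huI.1]
      rw [← hval]
      refine intervalIntegral.integral_mono_on huI.1 hIu2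
        ((ker_integrable hα1 u T u).mul_const D) ?_
      intro s hs
      exact mul_le_mul_of_nonneg_left (humax ⟨hs.1, hs.2.trans huI.2⟩)
        (Real.rpow_nonneg (by linarith [hs.2]) _)
    have hrpow : (u - T) ^ (1 - α) ≤ δ ^ (1 - α) :=
      Real.rpow_le_rpow (by linarith [huI.1]) (by linarith [huI.2, ht₀Tδ]) h1α.le
    have hintnonneg : 0 ≤ ∫ s in T..u, (u - s) ^ (-α) * |r₁ s - r₂ s| := by
      apply intervalIntegral.integral_nonneg huI.1
      intro s hs
      exact mul_nonneg (Real.rpow_nonneg (by linarith [hs.2]) _) (abs_nonneg _)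
    have hDle : D ≤ A * (δ ^ (1 - α) / (1 - α)) * D := by
      calc D ≤ K * (κ * lam⁻¹) * ∫ s in (0:ℝ)..u, (u - s) ^ (-α) * |r₁ s - r₂ s| :=
            key u huM
        _ = K * (κ * lam⁻¹) * ∫ s in T..u, (u - s) ^ (-α) * |r₁ s - r₂ s| := by
            rw [hsplit, hz1, zero_add]
        _ ≤ A * (((u - T) ^ (1 - α) / (1 - α)) * D) := by
            apply mul_le_mul hKA hest2 hintnonneg hA0.le
        _ ≤ A * ((δ ^ (1 - α) / (1 - α)) * D) := by
            apply mul_le_mul_of_nonneg_left _ hA0.le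
            apply mul_le_mul_of_nonneg_right _ hD0
            gcongr
        _ = A * (δ ^ (1 - α) / (1 - α)) * D := by ring
    have hhalf : A * (δ ^ (1 - α) / (1 - α)) = 1 / 2 := by
      rw [hδval]; field_simp
    have hDzero : D = 0 := by
      rw [hhalf] at hDle; linarith
    have hzero : ∀ s ∈ Icc T t₀, r₁ s = r₂ s := by
      intro s hs
      have h1 : |r₁ s - r₂ s| ≤ D := humax hs
      have h2 : |r₁ s - r₂ s| = 0 := le_antisymm (hDzero ▸ h1) (abs_nonneg _)
      exact sub_eq_zero.1 (abs_eq_zero.1 h2)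
    have ht₀Z : t₀ ∈ Z := ⟨⟨hT0.trans hTt₀.le, ht₀M⟩, by
      intro s hs
      rcases le_or_gt s T with h | h
      · exact hTzero s ⟨hs.1, h⟩
      · exact hzero s ⟨h.le, hs.2⟩⟩
    exact absurd (le_csSup hZbdd ht₀Z) (not_le.2 hTt₀)
end

section
/- Let M > 0, let ζ : [0,∞) → [0,∞) be antitone (nonincreasing) and locally integrable, and let f : [0,M] → ℝ be bounded and measurable with sup norm ‖f‖∞. Then for all t ≥ 0 and h > 0 with t + h ≤ M, one has | ∫₀ᵗ ζ(t−s) f(s) ds − ∫₀^{t+h} ζ(t+h−s) f(s) ds | ≤ 2 ‖f‖∞ ∫₀^h ζ(s) ds. -/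
open MeasureTheory Set Filter Topology

/-- Uniform equicontinuity modulus for convolutions against a nonincreasing
nonnegative locally integrable kernel `ζ`: the increment between nearby times
is controlled by `2 ‖f‖∞ ∫₀ʰ ζ(s) ds`. -/
theorem stmt_5
    (M : ℝ) (hM : 0 < M)
    (ζ : ℝ → ℝ) (hζ_nonneg : ∀ s, 0 ≤ s → 0 ≤ ζ s)
    (hζ_anti : AntitoneOn ζ (Ici 0))
    (hζ_int : ∀ b, 0 < b → IntegrableOn ζ (Icc 0 b))
    (f : ℝ → ℝ) (hf_meas : Measurable f)
    (Cf : ℝ) (hCf : ∀ s ∈ Icc (0:ℝ) M, |f s| ≤ Cf)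
    (t h : ℝ) (ht : 0 ≤ t) (hh : 0 < h) (hth : t + h ≤ M) :
    |(∫ s in (0:ℝ)..t, ζ (t - s) * f s) - ∫ s in (0:ℝ)..(t + h), ζ (t + h - s) * f s|
      ≤ 2 * Cf * ∫ s in (0:ℝ)..h, ζ s := by
  have hth0 : (0:ℝ) < t + h := by linarith
  have hCf0 : 0 ≤ Cf := le_trans (abs_nonneg _) (hCf 0 ⟨le_refl _, hM.le⟩)
  have hζI : IntervalIntegrable ζ volume 0 (t + h) := by
    rw [intervalIntegrable_iff_integrableOn_Icc_of_le hth0.le]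
    exact hζ_int _ hth0
  -- subintervals of [0, t+h]
  have hsub : ∀ a b : ℝ, 0 ≤ a → a ≤ b → b ≤ t + h → IntervalIntegrable ζ volume a b := by
    intro a b ha hab hb
    refine hζI.mono_set ?_
    rw [uIcc_of_le hab, uIcc_of_le hth0.le]
    exact Icc_subset_Icc ha hb
  -- shifted kernels
  have hshift : ∀ a b c : ℝ, 0 ≤ c - b → a ≤ b → c - a ≤ t + h →
      IntervalIntegrable (fun s => ζ (c - s)) volume a b := by
    intro a b c h1 h2 h3
    have := (hsub (c - b) (c - a) h1 (by linarith) h3).comp_sub_left c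
    simpa using this.symm
  -- products with f
  have hprod : ∀ a b c : ℝ, 0 ≤ a → a ≤ b → b ≤ M → 0 ≤ c - b → c - a ≤ t + h →
      IntervalIntegrable (fun s => ζ (c - s) * f s) volume a b := by
    intro a b c ha hab hbM h1 h2
    have hz := hshift a b c h1 hab h2
    rw [intervalIntegrable_iff] at hz ⊢
    have hbound : ∀ᵐ x ∂(volume.restrict (Set.uIoc a b)), ‖f x‖ ≤ Cf := by
      refine ae_restrict_of_forall_mem measurableSet_uIoc fun x hx => ?_
      rw [uIoc_of_le hab] at hx
      exact hCf (x) ⟨le_trans ha hx.1.le, le_trans hx.2 hbM⟩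
    have := hz.bdd_mul hf_meas.aestronglyMeasurable hbound
    exact this.congr (Filter.Eventually.of_forall fun s => mul_comm _ _)
  have i1 : IntervalIntegrable (fun s => ζ (t - s) * f s) volume 0 t :=
    hprod 0 t t le_rfl ht (by linarith) (by linarith) (by linarith)
  have i2 : IntervalIntegrable (fun s => ζ (t + h - s) * f s) volume 0 t :=
    hprod 0 t (t + h) le_rfl ht (by linarith) (by linarith) (by linarith)
  have i3 : IntervalIntegrable (fun s => ζ (t + h - s) * f s) volume t (t + h) :=
    hprod t (t + h) (t + h) ht (by linarith) hth (by linarith) (by linarith)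
  have split : (∫ s in (0:ℝ)..(t + h), ζ (t + h - s) * f s)
      = (∫ s in (0:ℝ)..t, ζ (t + h - s) * f s) + ∫ s in t..(t + h), ζ (t + h - s) * f s :=
    (intervalIntegral.integral_add_adjacent_intervals i2 i3).symm
  have ediff : (∫ s in (0:ℝ)..t, ζ (t - s) * f s)
        - ∫ s in (0:ℝ)..(t + h), ζ (t + h - s) * f s
      = (∫ s in (0:ℝ)..t, (ζ (t - s) - ζ (t + h - s)) * f s)
        - ∫ s in t..(t + h), ζ (t + h - s) * f s := by
    have e : ∫ s in (0:ℝ)..t, (ζ (t - s) - ζ (t + h - s)) * f s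
        = (∫ s in (0:ℝ)..t, ζ (t - s) * f s) - ∫ s in (0:ℝ)..t, ζ (t + h - s) * f s := by
      simp_rw [sub_mul]
      exact intervalIntegral.integral_sub i1 i2
    rw [split, e]; ring
  -- change of variables
  have c1 : (∫ s in (0:ℝ)..t, ζ (t - s)) = ∫ s in (0:ℝ)..t, ζ s := by
    simpa using intervalIntegral.integral_comp_sub_left ζ t (a := 0) (b := t)
  have c2 : (∫ s in (0:ℝ)..t, ζ (t + h - s)) = ∫ s in h..(t + h), ζ s := by
    simpa using intervalIntegral.integral_comp_sub_left ζ (t + h) (a := 0) (b := t)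
  have c3 : (∫ s in t..(t + h), ζ (t + h - s)) = ∫ s in (0:ℝ)..h, ζ s := by
    simpa using intervalIntegral.integral_comp_sub_left ζ (t + h) (a := t) (b := t + h)
  -- integrability of plain pieces
  have j1 : IntervalIntegrable (fun s => ζ (t - s)) volume 0 t :=
    hshift 0 t t (by linarith) ht (by linarith)
  have j2 : IntervalIntegrable (fun s => ζ (t + h - s)) volume 0 t :=
    hshift 0 t (t + h) (by linarith) ht (by linarith)
  have j3 : IntervalIntegrable (fun s => ζ (t + h - s)) volume t (t + h) :=
    hshift t (t + h) (t + h) (by linarith) (by linarith) (by linarith)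
  -- bound the first term
  have bX : |∫ s in (0:ℝ)..t, (ζ (t - s) - ζ (t + h - s)) * f s|
      ≤ Cf * ((∫ s in (0:ℝ)..t, ζ s) - ∫ s in h..(t + h), ζ s) := by
    have hb : ∀ᵐ x ∂(volume.restrict (Set.uIoc 0 t)),
        ‖(ζ (t - x) - ζ (t + h - x)) * f x‖ ≤ (ζ (t - x) - ζ (t + h - x)) * Cf := by
      refine ae_restrict_of_forall_mem measurableSet_uIoc fun x hx => ?_
      rw [uIoc_of_le ht] at hx
      have hx0 : 0 ≤ x := hx.1.le
      have hxt : x ≤ t := hx.2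
      have hmono : ζ (t + h - x) ≤ ζ (t - x) :=
        hζ_anti (by simp; linarith) (by simp; linarith) (by linarith)
      have h0 : 0 ≤ ζ (t - x) - ζ (t + h - x) := by linarith
      rw [norm_mul]
      rw [Real.norm_eq_abs, Real.norm_eq_abs, abs_of_nonneg h0]
      exact mul_le_mul_of_nonneg_left (hCf x ⟨hx0, by linarith⟩) h0
    have hgint : IntervalIntegrable (fun x => (ζ (t - x) - ζ (t + h - x)) * Cf) volume 0 t :=
      (j1.sub j2).mul_const Cf
    have := intervalIntegral.norm_integral_le_abs_of_norm_le hb hgint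
    rw [Real.norm_eq_abs] at this
    refine this.trans ?_
    have e : (∫ x in (0:ℝ)..t, (ζ (t - x) - ζ (t + h - x)) * Cf)
        = ((∫ s in (0:ℝ)..t, ζ s) - ∫ s in h..(t + h), ζ s) * Cf := by
      rw [intervalIntegral.integral_mul_const, intervalIntegral.integral_sub j1 j2, c1, c2]
    have hd0 : 0 ≤ (∫ s in (0:ℝ)..t, ζ s) - ∫ s in h..(t + h), ζ s := by
      rw [← c1, ← c2, ← intervalIntegral.integral_sub j1 j2]
      refine intervalIntegral.integral_nonneg ht fun u hu => ?_
      have := hζ_anti (mem_Ici.mpr (show (0:ℝ) ≤ t - u by linarith [hu.2]))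
        (mem_Ici.mpr (show (0:ℝ) ≤ t + h - u by linarith [hu.2])) (by linarith)
      linarith
    rw [e, abs_mul, abs_of_nonneg hCf0, abs_of_nonneg hd0, mul_comm]
  -- bound the second term
  have bY : |∫ s in t..(t + h), ζ (t + h - s) * f s| ≤ Cf * ∫ s in (0:ℝ)..h, ζ s := by
    have hb : ∀ᵐ x ∂(volume.restrict (Set.uIoc t (t + h))),
        ‖ζ (t + h - x) * f x‖ ≤ ζ (t + h - x) * Cf := by
      refine ae_restrict_of_forall_mem measurableSet_uIoc fun x hx => ?_
      rw [uIoc_of_le (by linarith : t ≤ t + h)] at hx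
      have hz : 0 ≤ ζ (t + h - x) := hζ_nonneg _ (by linarith [hx.2])
      rw [norm_mul, Real.norm_eq_abs, Real.norm_eq_abs, abs_of_nonneg hz]
      exact mul_le_mul_of_nonneg_left (hCf x ⟨by linarith [hx.1], by linarith [hx.2]⟩) hz
    have hgint : IntervalIntegrable (fun x => ζ (t + h - x) * Cf) volume t (t + h) :=
      j3.mul_const Cf
    have := intervalIntegral.norm_integral_le_abs_of_norm_le hb hgint
    rw [Real.norm_eq_abs] at this
    refine this.trans ?_
    have e : (∫ x in t..(t + h), ζ (t + h - x) * Cf) = (∫ s in (0:ℝ)..h, ζ s) * Cf := by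
      rw [intervalIntegral.integral_mul_const, c3]
    have h0h : 0 ≤ ∫ s in (0:ℝ)..h, ζ s :=
      intervalIntegral.integral_nonneg hh.le fun u hu => hζ_nonneg u hu.1
    rw [e, abs_mul, abs_of_nonneg hCf0, abs_of_nonneg h0h, mul_comm]
  -- interval arithmetic on ζ
  have add1 : (∫ s in (0:ℝ)..t, ζ s) + (∫ s in t..(t + h), ζ s) = ∫ s in (0:ℝ)..(t + h), ζ s :=
    intervalIntegral.integral_add_adjacent_intervals
      (hsub 0 t le_rfl ht (by linarith)) (hsub t (t + h) ht (by linarith) le_rfl)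
  have add2 : (∫ s in (0:ℝ)..h, ζ s) + (∫ s in h..(t + h), ζ s) = ∫ s in (0:ℝ)..(t + h), ζ s :=
    intervalIntegral.integral_add_adjacent_intervals
      (hsub 0 h le_rfl hh.le (by linarith)) (hsub h (t + h) hh.le (by linarith) le_rfl)
  have hpos : 0 ≤ ∫ s in t..(t + h), ζ s :=
    intervalIntegral.integral_nonneg (by linarith) (fun u hu => hζ_nonneg u (by linarith [hu.1]))
  have key : (∫ s in (0:ℝ)..t, ζ s) - (∫ s in h..(t + h), ζ s) ≤ ∫ s in (0:ℝ)..h, ζ s := by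
    linarith
  calc |(∫ s in (0:ℝ)..t, ζ (t - s) * f s) - ∫ s in (0:ℝ)..(t + h), ζ (t + h - s) * f s|
      = |(∫ s in (0:ℝ)..t, (ζ (t - s) - ζ (t + h - s)) * f s)
          - ∫ s in t..(t + h), ζ (t + h - s) * f s| := by rw [ediff]
    _ ≤ |∫ s in (0:ℝ)..t, (ζ (t - s) - ζ (t + h - s)) * f s|
          + |∫ s in t..(t + h), ζ (t + h - s) * f s| := abs_sub _ _
    _ ≤ Cf * ((∫ s in (0:ℝ)..t, ζ s) - ∫ s in h..(t + h), ζ s)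
          + Cf * ∫ s in (0:ℝ)..h, ζ s := add_le_add bX bY
    _ ≤ 2 * Cf * ∫ s in (0:ℝ)..h, ζ s := by nlinarith [key]
end

section
/- Let β > 0. Let k : [0,∞) → [0,∞) be locally integrable, let f : [0,β] → ℝ be bounded and measurable, and let g : ℝ → ℝ be locally Lipschitz continuous. Then the nonlinear Volterra equation y(t) = f(t) + ∫₀ᵗ k(t−s) g(y(s)) ds has at most one bounded measurable solution on [0,β]: if y₁ and y₂ are bounded measurable functions on [0,β] both satisfying the equation for all t ∈ [0,β], then y₁(t) = y₂(t) for all t ∈ [0,β]. -/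
open MeasureTheory Set Filter Topology

/-- A locally Lipschitz function is (really) Lipschitz on every compact set. -/
lemma aux_lipschitz_on_compact {g : ℝ → ℝ} (hg : LocallyLipschitz g) {s : Set ℝ}
    (hs : IsCompact s) :
    ∃ L : ℝ, 0 ≤ L ∧ ∀ x ∈ s, ∀ y ∈ s, |g x - g y| ≤ L * |x - y| := by
  have hg_cont : ContinuousOn g s := hg.continuous.continuousOn
  choose K t ht hK using hg
  obtain ⟨C, hC⟩ := hs.exists_bound_of_continuousOn hg_cont
  have hcover : s ⊆ ⋃ x : s, interior (t x) := fun x hx =>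
    Set.mem_iUnion.2 ⟨⟨x, hx⟩, mem_interior_iff_mem_nhds.2 (ht x)⟩
  obtain ⟨I, hI⟩ := hs.elim_finite_subcover (fun x : s => interior (t x))
    (fun _ => isOpen_interior) hcover
  have hI' : s ⊆ ⋃ i : I, interior (t i.1) := by
    intro x hx
    obtain ⟨i, hiI, hxi⟩ := Set.mem_iUnion₂.1 (hI hx)
    exact Set.mem_iUnion.2 ⟨⟨i, hiI⟩, hxi⟩
  obtain ⟨δ, hδ, hball⟩ := lebesgue_number_lemma_of_metric hs
    (fun _ : I => isOpen_interior) hI'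
  set Kmax : NNReal := I.sup (fun i => K i) with hKmax
  set C' : ℝ := max C 0 with hC'
  refine ⟨max (Kmax : ℝ) (2 * C' / δ), le_max_of_le_left Kmax.coe_nonneg, ?_⟩
  intro x hx y hy
  rcases lt_or_ge (dist x y) δ with hlt | hge
  · obtain ⟨i, hi⟩ := hball x hx
    have hxt : x ∈ t i.1 := interior_subset (hi (Metric.mem_ball_self hδ))
    have hyt : y ∈ t i.1 := interior_subset (hi (by simpa [Metric.mem_ball, dist_comm] using hlt))
    have h1 : dist (g x) (g y) ≤ (K i.1 : ℝ) * dist x y :=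
      (hK i.1).dist_le_mul x hxt y hyt
    have h2 : (K i.1 : ℝ) ≤ (Kmax : ℝ) := by
      have : K i.1 ≤ Kmax := Finset.le_sup (f := fun j : s => K j) i.2
      exact_mod_cast this
    calc |g x - g y| = dist (g x) (g y) := (Real.dist_eq _ _).symm
      _ ≤ (K i.1 : ℝ) * dist x y := h1
      _ ≤ (Kmax : ℝ) * |x - y| := by
          rw [Real.dist_eq]
          exact mul_le_mul_of_nonneg_right h2 (abs_nonneg _)
      _ ≤ max (Kmax : ℝ) (2 * C' / δ) * |x - y| :=
          mul_le_mul_of_nonneg_right (le_max_left _ _) (abs_nonneg _)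
  · have hgx : |g x| ≤ C' := (hC x hx).trans (le_max_left _ _)
    have hgy : |g y| ≤ C' := (hC y hy).trans (le_max_left _ _)
    have hxy : δ ≤ |x - y| := by rwa [Real.dist_eq] at hge
    have h1 : |g x - g y| ≤ 2 * C' := by
      calc |g x - g y| ≤ |g x| + |g y| := abs_sub _ _
        _ ≤ 2 * C' := by linarith
    calc |g x - g y| ≤ 2 * C' := h1
      _ = 2 * C' / δ * δ := by field_simp
      _ ≤ 2 * C' / δ * |x - y| := by
          apply mul_le_mul_of_nonneg_left hxy
          positivity
      _ ≤ max (Kmax : ℝ) (2 * C' / δ) * |x - y| :=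
          mul_le_mul_of_nonneg_right (le_max_right _ _) (abs_nonneg _)

/-- Uniqueness of bounded measurable solutions of the nonlinear Volterra equation
`y(t) = f(t) + ∫₀ᵗ k(t−s) g(y(s)) ds` on `[0, β]`, for a locally integrable
nonnegative kernel `k`, bounded measurable forcing `f` and locally Lipschitz `g`. -/
theorem stmt_6
    (β : ℝ) (hβ : 0 < β)
    (k : ℝ → ℝ) (hk_nonneg : ∀ s, 0 ≤ s → 0 ≤ k s)
    (hk_loc : ∀ b, 0 < b → IntegrableOn k (Icc 0 b))
    (f : ℝ → ℝ) (hf_meas : Measurable f)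
    (hf_bdd : ∃ C, ∀ t ∈ Icc (0:ℝ) β, |f t| ≤ C)
    (g : ℝ → ℝ) (hg_lip : LocallyLipschitz g)
    (y₁ y₂ : ℝ → ℝ)
    (hy₁_meas : Measurable y₁) (hy₁_bdd : ∃ C, ∀ t ∈ Icc (0:ℝ) β, |y₁ t| ≤ C)
    (hy₂_meas : Measurable y₂) (hy₂_bdd : ∃ C, ∀ t ∈ Icc (0:ℝ) β, |y₂ t| ≤ C)
    (hy₁ : ∀ t ∈ Icc (0:ℝ) β, y₁ t = f t + ∫ s in (0:ℝ)..t, k (t - s) * g (y₁ s))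
    (hy₂ : ∀ t ∈ Icc (0:ℝ) β, y₂ t = f t + ∫ s in (0:ℝ)..t, k (t - s) * g (y₂ s)) :
    ∀ t ∈ Icc (0:ℝ) β, y₁ t = y₂ t := by
  obtain ⟨C₁, hC₁⟩ := hy₁_bdd
  obtain ⟨C₂, hC₂⟩ := hy₂_bdd
  set M : ℝ := max C₁ C₂ with hM
  have hy₁M : ∀ s ∈ Icc (0:ℝ) β, y₁ s ∈ Icc (-M) M := fun s hs => by
    have := (hC₁ s hs).trans (le_max_left C₁ C₂)
    exact abs_le.1 this
  have hy₂M : ∀ s ∈ Icc (0:ℝ) β, y₂ s ∈ Icc (-M) M := fun s hs => by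
    have := (hC₂ s hs).trans (le_max_right C₁ C₂)
    exact abs_le.1 this
  obtain ⟨L, hLnn, hL⟩ := aux_lipschitz_on_compact hg_lip (isCompact_Icc (a := -M) (b := M))
  set L0 : ℝ := max L 1 with hL0def
  have hL0pos : (0:ℝ) < L0 := lt_of_lt_of_le one_pos (le_max_right _ _)
  obtain ⟨Cg, hCg⟩ := (isCompact_Icc (a := -M) (b := M)).exists_bound_of_continuousOn
    hg_lip.continuous.continuousOn
  -- choose δ > 0 with L0 * ∫₀^δ k ≤ 1/2
  have hδ_ex : ∃ δ : ℝ, 0 < δ ∧ δ ≤ β ∧ (∫ s in (0:ℝ)..δ, k s) ≤ 1 / (2 * L0) := by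
    have hcont : ContinuousOn (fun x => ∫ s in Ioc (0:ℝ) x, k s) (Icc 0 β) :=
      intervalIntegral.continuousOn_primitive (hk_loc β hβ)
    have h0 : (∫ s in Ioc (0:ℝ) (0:ℝ), k s) = 0 := by simp
    have htend : Tendsto (fun x => ∫ s in Ioc (0:ℝ) x, k s) (𝓝[Icc 0 β] 0) (𝓝 0) := by
      have := hcont 0 ⟨le_rfl, hβ.le⟩
      rwa [ContinuousWithinAt, h0] at this
    have hev : ∀ᶠ x in 𝓝[Icc 0 β] 0, (∫ s in Ioc (0:ℝ) x, k s) < 1 / (2 * L0) :=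
      htend.eventually_lt_const (by positivity)
    have hev' : ∀ᶠ x in 𝓝[Ioc 0 β] 0, (∫ s in Ioc (0:ℝ) x, k s) < 1 / (2 * L0) :=
      hev.filter_mono (nhdsWithin_mono 0 Ioc_subset_Icc_self)
    have : NeBot (𝓝[Ioc 0 β] 0) := left_nhdsWithin_Ioc_neBot hβ
    obtain ⟨δ, hδ1, hδ2⟩ := (hev'.and eventually_mem_nhdsWithin).exists
    refine ⟨δ, hδ2.1, hδ2.2, ?_⟩
    rw [intervalIntegral.integral_of_le hδ2.1.le]
    exact hδ1.le
  obtain ⟨δ, hδpos, hδβ, hδk⟩ := hδ_ex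
  set u : ℝ → ℝ := fun t => |y₁ t - y₂ t| with hu
  have hu_meas : Measurable u := (hy₁_meas.sub hy₂_meas).abs
  have hu_nonneg : ∀ t, 0 ≤ u t := fun t => abs_nonneg _
  have hu_bdd : ∀ t ∈ Icc (0:ℝ) β, u t ≤ C₁ + C₂ := fun t ht =>
    (abs_sub _ _).trans (add_le_add (hC₁ t ht) (hC₂ t ht))
  -- interval integrability of the kernel
  have hkt : ∀ t ∈ Icc (0:ℝ) β, IntervalIntegrable (fun s => k (t - s)) volume 0 t := by
    intro t ht
    rcases eq_or_lt_of_le ht.1 with h0 | h0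
    · rw [← h0]
    · have hk' : IntervalIntegrable k volume 0 t := by
        apply IntegrableOn.intervalIntegrable
        rw [uIcc_of_le ht.1]
        exact hk_loc t h0
      have := (hk'.comp_sub_left t).symm
      simpa using this
  -- interval integrability of products with bounded measurable functions
  have hprod : ∀ t ∈ Icc (0:ℝ) β, ∀ (h : ℝ → ℝ) (C : ℝ), Measurable h →
      (∀ s ∈ Icc (0:ℝ) t, |h s| ≤ C) →
      IntervalIntegrable (fun s => k (t - s) * h s) volume 0 t := by
    intro t ht h C hmeas hbd
    rw [intervalIntegrable_iff_integrableOn_Ioc_of_le ht.1]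
    have hk' : IntegrableOn (fun s => k (t - s)) (Ioc 0 t) volume :=
      (intervalIntegrable_iff_integrableOn_Ioc_of_le ht.1).1 (hkt t ht)
    have hbd' : ∀ᵐ x ∂(volume.restrict (Ioc 0 t)), ‖h x‖ ≤ C := by
      filter_upwards [ae_restrict_mem measurableSet_Ioc] with x hx
      exact hbd x ⟨hx.1.le, hx.2⟩
    have := Integrable.bdd_mul hk' hmeas.aestronglyMeasurable hbd'
    exact this.congr (Eventually.of_forall fun x => mul_comm _ _)
  -- the inductive uniqueness claim
  have main : ∀ n : ℕ, ∀ t ∈ Icc (0:ℝ) β, t ≤ (n : ℝ) * δ → y₁ t = y₂ t := by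
    intro n
    induction n with
    | zero =>
      intro t ht ht0
      have ht0' : t = 0 := le_antisymm (by simpa using ht0) ht.1
      subst ht0'
      rw [hy₁ 0 ⟨le_rfl, hβ.le⟩, hy₂ 0 ⟨le_rfl, hβ.le⟩]
      simp
    | succ n ih =>
      intro t ht htn
      push_cast at htn
      set T : ℝ := min (((n : ℝ) + 1) * δ) β with hT
      have hT0 : 0 ≤ T := le_min (by positivity) hβ.le
      have hTβ : T ≤ β := min_le_right _ _
      have hne : (u '' Icc 0 T).Nonempty := ⟨u 0, ⟨0, ⟨le_rfl, hT0⟩, rfl⟩⟩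
      have hbddS : BddAbove (u '' Icc 0 T) := by
        refine ⟨C₁ + C₂, ?_⟩
        rintro x ⟨r, hr, rfl⟩
        exact hu_bdd r ⟨hr.1, hr.2.trans hTβ⟩
      set S : ℝ := sSup (u '' Icc 0 T) with hS
      have hS0 : 0 ≤ S :=
        (hu_nonneg 0).trans (le_csSup hbddS ⟨0, ⟨le_rfl, hT0⟩, rfl⟩)
      have huS : ∀ r ∈ Icc (0:ℝ) T, u r ≤ S := fun r hr =>
        le_csSup hbddS ⟨r, hr, rfl⟩
      -- key contraction estimate
      have key : ∀ r ∈ Icc (0:ℝ) T, u r ≤ S / 2 := by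
        intro r hr
        have hrβ : r ∈ Icc (0:ℝ) β := ⟨hr.1, hr.2.trans hTβ⟩
        rcases eq_or_lt_of_le hr.1 with h0 | h0
        · have hu0 : u 0 = 0 := by
            rw [hu]
            simp only []
            rw [hy₁ 0 ⟨le_rfl, hβ.le⟩, hy₂ 0 ⟨le_rfl, hβ.le⟩]
            simp
          rw [← h0, hu0]
          linarith
        -- bounds for g ∘ y on [0, r]
        have hgy₁ : ∀ s ∈ Icc (0:ℝ) r, |g (y₁ s)| ≤ Cg := fun s hs =>
          hCg (y₁ s) (hy₁M s ⟨hs.1, hs.2.trans hrβ.2⟩)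
        have hgy₂ : ∀ s ∈ Icc (0:ℝ) r, |g (y₂ s)| ≤ Cg := fun s hs =>
          hCg (y₂ s) (hy₂M s ⟨hs.1, hs.2.trans hrβ.2⟩)
        have hint₁ : IntervalIntegrable (fun s => k (r - s) * g (y₁ s)) volume 0 r :=
          hprod r hrβ _ Cg (hg_lip.continuous.measurable.comp hy₁_meas) hgy₁
        have hint₂ : IntervalIntegrable (fun s => k (r - s) * g (y₂ s)) volume 0 r :=
          hprod r hrβ _ Cg (hg_lip.continuous.measurable.comp hy₂_meas) hgy₂
        have hintU : IntervalIntegrable (fun s => k (r - s) * (L0 * u s)) volume 0 r := by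
          refine hprod r hrβ _ (L0 * (C₁ + C₂)) (hu_meas.const_mul L0) ?_
          intro s hs
          rw [abs_of_nonneg (by positivity : (0:ℝ) ≤ L0 * u s)]
          exact mul_le_mul_of_nonneg_left
            (hu_bdd s ⟨hs.1, hs.2.trans hrβ.2⟩) hL0pos.le
        have hdiff : y₁ r - y₂ r =
            ∫ s in (0:ℝ)..r, (k (r - s) * g (y₁ s) - k (r - s) * g (y₂ s)) := by
          rw [hy₁ r hrβ, hy₂ r hrβ, intervalIntegral.integral_sub hint₁ hint₂]
          ring
        have step1 : u r ≤ ∫ s in (0:ℝ)..r, k (r - s) * (L0 * u s) := by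
          rw [hu]
          simp only []
          rw [hdiff]
          calc |∫ s in (0:ℝ)..r, (k (r - s) * g (y₁ s) - k (r - s) * g (y₂ s))|
              ≤ ∫ s in (0:ℝ)..r, |k (r - s) * g (y₁ s) - k (r - s) * g (y₂ s)| :=
                intervalIntegral.abs_integral_le_integral_abs hr.1
            _ ≤ ∫ s in (0:ℝ)..r, k (r - s) * (L0 * u s) := by
                apply intervalIntegral.integral_mono_on hr.1 (hint₁.sub hint₂).abs hintU
                intro s hs
                have hks : 0 ≤ k (r - s) := hk_nonneg _ (by linarith [hs.2])
                rw [← mul_sub, abs_mul, abs_of_nonneg hks]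
                apply mul_le_mul_of_nonneg_left _ hks
                have hsβ : s ∈ Icc (0:ℝ) β := ⟨hs.1, hs.2.trans hrβ.2⟩
                calc |g (y₁ s) - g (y₂ s)| ≤ L * |y₁ s - y₂ s| :=
                      hL (y₁ s) (hy₁M s hsβ) (y₂ s) (hy₂M s hsβ)
                  _ ≤ L0 * u s :=
                      mul_le_mul_of_nonneg_right (le_max_left _ _) (abs_nonneg _)
        -- split the integral at a := max (r - δ) 0
        set a : ℝ := max (r - δ) 0 with ha
        have ha0 : 0 ≤ a := le_max_right _ _
        have har : a ≤ r := max_le (by linarith) hr.1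
        have hanδ : a ≤ (n : ℝ) * δ := by
          apply max_le _ (by positivity)
          have : r ≤ ((n : ℝ) + 1) * δ := hr.2.trans (min_le_left _ _)
          linarith
        have hsub1 : IntervalIntegrable (fun s => k (r - s) * (L0 * u s)) volume 0 a :=
          hintU.mono_set (by rw [uIcc_of_le ha0, uIcc_of_le hr.1]; exact Icc_subset_Icc le_rfl har)
        have hsub2 : IntervalIntegrable (fun s => k (r - s) * (L0 * u s)) volume a r :=
          hintU.mono_set (by rw [uIcc_of_le har, uIcc_of_le hr.1]; exact Icc_subset_Icc ha0 le_rfl)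
        have hsplit : (∫ s in (0:ℝ)..r, k (r - s) * (L0 * u s)) =
            (∫ s in (0:ℝ)..a, k (r - s) * (L0 * u s)) +
            (∫ s in a..r, k (r - s) * (L0 * u s)) :=
          (intervalIntegral.integral_add_adjacent_intervals hsub1 hsub2).symm
        have hfirst : (∫ s in (0:ℝ)..a, k (r - s) * (L0 * u s)) = 0 := by
          rw [intervalIntegral.integral_congr (g := fun _ => (0:ℝ)) ?_, intervalIntegral.integral_zero]
          intro s hs
          rw [uIcc_of_le ha0] at hs
          have hsβ : s ∈ Icc (0:ℝ) β := ⟨hs.1, (hs.2.trans har).trans hrβ.2⟩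
          have : y₁ s = y₂ s := ih s hsβ (hs.2.trans hanδ)
          simp [hu, this]
        have hsecond : (∫ s in a..r, k (r - s) * (L0 * u s)) ≤
            (∫ s in a..r, k (r - s) * (L0 * S)) := by
          have hconst : IntervalIntegrable (fun s => k (r - s) * (L0 * S)) volume a r :=
            ((hkt r hrβ).mono_set
              (by rw [uIcc_of_le har, uIcc_of_le hr.1]; exact Icc_subset_Icc ha0 le_rfl)).mul_const _
          apply intervalIntegral.integral_mono_on har hsub2 hconst
          intro s hs
          have hks : 0 ≤ k (r - s) := hk_nonneg _ (by linarith [hs.2])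
          apply mul_le_mul_of_nonneg_left _ hks
          apply mul_le_mul_of_nonneg_left _ hL0pos.le
          exact huS s ⟨ha0.trans hs.1, hs.2.trans hr.2⟩
        have hval : (∫ s in a..r, k (r - s) * (L0 * S)) =
            (∫ x in (0:ℝ)..(r - a), k x) * (L0 * S) := by
          rw [intervalIntegral.integral_mul_const, intervalIntegral.integral_comp_sub_left k r,
            sub_self]
        have hklesser : (∫ x in (0:ℝ)..(r - a), k x) ≤ ∫ x in (0:ℝ)..δ, k x := by
          apply intervalIntegral.integral_mono_interval le_rfl (by linarith) (by
            have h1 := le_max_left (r - δ) (0:ℝ)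
            rw [ha]; linarith)
          · filter_upwards [ae_restrict_mem measurableSet_Ioc] with x hx
            exact hk_nonneg x hx.1.le
          · apply IntegrableOn.intervalIntegrable
            rw [uIcc_of_le hδpos.le]
            exact hk_loc δ hδpos
        have hkpos : 0 ≤ ∫ x in (0:ℝ)..(r - a), k x := by
          apply intervalIntegral.integral_nonneg (by linarith)
          intro x hx
          exact hk_nonneg x hx.1
        calc u r ≤ ∫ s in (0:ℝ)..r, k (r - s) * (L0 * u s) := step1
          _ = (∫ s in a..r, k (r - s) * (L0 * u s)) := by rw [hsplit, hfirst, zero_add]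
          _ ≤ (∫ x in (0:ℝ)..(r - a), k x) * (L0 * S) := hsecond.trans hval.le
          _ ≤ (1 / (2 * L0)) * (L0 * S) := by
              apply mul_le_mul_of_nonneg_right (hklesser.trans hδk)
              positivity
          _ = S / 2 := by field_simp
      have hSle : S ≤ S / 2 := by
        apply csSup_le hne
        rintro x ⟨r, hr, rfl⟩
        exact key r hr
      have hS0' : S ≤ 0 := by linarith
      have htT : t ∈ Icc (0:ℝ) T := ⟨ht.1, le_min htn ht.2⟩
      have : u t = 0 := le_antisymm ((huS t htT).trans hS0') (hu_nonneg t)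
      have := abs_eq_zero.1 this
      linarith [this]
  intro t ht
  obtain ⟨n, hn⟩ := exists_nat_ge (β / δ)
  exact main n t ht (ht.2.trans ((div_le_iff₀ hδpos).1 hn))
end

section
/- Let β > 0. Let k : [0,∞) → [0,∞) be locally integrable and satisfy: for every t₀ > 0, ∫₀^∞ |k(t₀ − s) − k(t − s)| ds → 0 as t → t₀ (with k extended by 0 on negative arguments). Let g : ℝ → ℝ be positive, bounded and locally Lipschitz continuous. Let f : [0,β] → ℝ be bounded and measurable, and let (fₙ) be a sequence of continuous bounded functions on [0,β] that is pointwise nonincreasing in n and converges pointwise to f. If xₙ is a continuous solution of xₙ(t) = fₙ(t) + ∫₀ᵗ k(t−s) g(xₙ(s)) ds on [0,β] for each n, and x is a bounded measurable solution of x(t) = f(t) + ∫₀ᵗ k(t−s) g(x(s)) ds on [0,β], then xₙ(t) → x(t) as n → ∞ for every t ∈ [0,β]. -/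
open MeasureTheory Set Filter Topology
open scoped ENNReal NNReal

-- substitution lemma
lemma lint_sub_aux (κ : ℝ → ℝ≥0∞) (t a : ℝ) :
    ∫⁻ s in Ioc a t, κ (t - s) = ∫⁻ u in Ico 0 (t - a), κ u := by
  have mp : MeasurePreserving (fun s : ℝ => t - s) volume volume :=
    Measure.measurePreserving_sub_left volume t
  have emb : MeasurableEmbedding (fun s : ℝ => t - s) :=
    (MeasurableEquiv.subLeft t).measurableEmbedding
  have hpre : (fun s : ℝ => t - s) ⁻¹' (Ico 0 (t - a)) = Ioc a t := by
    ext s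
    simp only [mem_preimage, mem_Ico, mem_Ioc]
    constructor
    · rintro ⟨h1, h2⟩; constructor <;> linarith
    · rintro ⟨h1, h2⟩; constructor <;> linarith
  rw [← hpre]
  exact mp.setLIntegral_comp_preimage_emb emb _ _

lemma gronwallENN (β : ℝ) (hβ : 0 < β) (κ : ℝ → ℝ≥0∞) (hκm : Measurable κ)
    (hκfin : ∫⁻ u in Ioc (0:ℝ) β, κ u ≠ ⊤)
    (V : ℝ → ℝ≥0∞) (S : ℝ≥0∞) (hS : S ≠ ⊤) (hVS : ∀ t ∈ Icc (0:ℝ) β, V t ≤ S)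
    (hV : ∀ t ∈ Icc (0:ℝ) β, V t ≤ ∫⁻ s in Ioc (0:ℝ) t, κ (t - s) * V s) :
    ∀ t ∈ Icc (0:ℝ) β, V t = 0 := by
  -- choose δ
  have hsmall : ∃ δ : ℝ, 0 < δ ∧ ∫⁻ u in Ioc (0:ℝ) δ, κ u < 1 := by
    set ν := volume.withDensity κ with hν
    have hνs : ∀ s : Set ℝ, MeasurableSet s → ν s = ∫⁻ u in s, κ u := by
      intro s hs; rw [hν, withDensity_apply _ hs]
    have hanti : Antitone (fun n : ℕ => Ioc (0:ℝ) (β / (n+1))) := by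
      intro m n hmn
      apply Ioc_subset_Ioc le_rfl
      apply div_le_div_of_nonneg_left hβ.le (by positivity)
      exact_mod_cast by omega
    have hiInter : (⋂ n : ℕ, Ioc (0:ℝ) (β / (n+1))) = ∅ := by
      ext z
      simp only [mem_iInter, mem_Ioc, mem_empty_iff_false, iff_false, not_forall]
      by_cases hz : 0 < z
      · obtain ⟨n, hn⟩ := exists_nat_gt (β / z)
        refine ⟨n, fun h => ?_⟩
        have : β / (n+1) < z := by
          rw [div_lt_iff₀ (by positivity)]
          have : β / z < n + 1 := by linarith
          rw [div_lt_iff₀ hz] at this; linarith [this]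
        linarith [h.2]
      · exact ⟨0, fun h => hz h.1⟩
    have htend := tendsto_measure_iInter_atTop (μ := ν)
      (fun n => (measurableSet_Ioc).nullMeasurableSet) hanti
      ⟨0, by rw [hνs _ measurableSet_Ioc]
             refine ne_top_of_le_ne_top hκfin (lintegral_mono_set ?_)
             apply Ioc_subset_Ioc le_rfl
             rw [div_le_iff₀ (by positivity)]; nlinarith⟩
    rw [hiInter] at htend
    simp only [measure_empty] at htend
    have := (htend.eventually_lt_const (by norm_num : (0:ℝ≥0∞) < 1)).exists
    obtain ⟨n, hn⟩ := this
    refine ⟨β / (n+1), by positivity, ?_⟩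
    simp only [Function.comp] at hn
    rwa [hνs _ measurableSet_Ioc] at hn
  obtain ⟨δ, hδ, hq⟩ := hsmall
  set q := ∫⁻ u in Ioc (0:ℝ) δ, κ u with hqdef
  -- induction
  have key : ∀ j : ℕ, ∀ t ∈ Icc (0:ℝ) β, t ≤ j * δ → V t = 0 := by
    intro j
    induction j with
    | zero =>
      intro t ht ht0
      have : t = 0 := le_antisymm (by simpa using ht0) ht.1
      subst this
      have := hV 0 ⟨le_rfl, hβ.le⟩
      simpa using this
    | succ j ih =>
      intro t ht htle
      by_cases hcase : t ≤ j * δ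
      · exact ih t ht hcase
      push_neg at hcase
      -- sup over the window
      set A : Set ℝ := {r | r ∈ Icc (0:ℝ) β ∧ r ≤ (j+1) * δ} with hA
      set S' : ℝ≥0∞ := ⨆ r ∈ A, V r with hS'
      have hS'S : S' ≤ S := by
        apply iSup₂_le
        intro r hr
        exact hVS r hr.1
      have hS'top : S' ≠ ⊤ := ne_top_of_le_ne_top hS hS'S
      -- main bound for points in the new strip
      have hmain : ∀ r ∈ Icc (0:ℝ) β, r ≤ (j+1) * δ → j * δ < r → V r ≤ q * S' := by
        intro r hr hr1 hr2
        have hjδ : 0 ≤ j * δ := by positivity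
        have hsplit : Ioc (0:ℝ) r = Ioc 0 (j*δ) ∪ Ioc (j*δ) r :=
          (Ioc_union_Ioc_eq_Ioc hjδ hr2.le).symm
        calc V r ≤ ∫⁻ s in Ioc (0:ℝ) r, κ (r - s) * V s := hV r hr
          _ = (∫⁻ s in Ioc (0:ℝ) (j*δ), κ (r - s) * V s)
              + ∫⁻ s in Ioc ((j:ℝ)*δ) r, κ (r - s) * V s := by
              rw [hsplit, lintegral_union measurableSet_Ioc (Ioc_disjoint_Ioc_of_le le_rfl)]
          _ = (∫⁻ s in Ioc (0:ℝ) (j*δ), (0:ℝ≥0∞))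
              + ∫⁻ s in Ioc ((j:ℝ)*δ) r, κ (r - s) * V s := by
              congr 1
              apply setLIntegral_congr_fun_ae measurableSet_Ioc
              apply ae_of_all
              intro s hs
              have hs0 : V s = 0 := ih s ⟨hs.1.le, le_trans hs.2 (le_trans hr2.le hr.2)⟩ hs.2
              rw [hs0, mul_zero]
          _ = ∫⁻ s in Ioc ((j:ℝ)*δ) r, κ (r - s) * V s := by simp
          _ ≤ ∫⁻ s in Ioc ((j:ℝ)*δ) r, κ (r - s) * S' := by
              apply setLIntegral_mono (by fun_prop)
              intro s hs
              apply mul_le_mul_right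
              have hsA : s ∈ A := ⟨⟨le_trans hjδ hs.1.le, le_trans hs.2 hr.2⟩, le_trans hs.2 hr1⟩
              exact le_biSup V hsA
          _ = (∫⁻ s in Ioc ((j:ℝ)*δ) r, κ (r - s)) * S' := by
              rw [← lintegral_mul_const _ (by fun_prop)]
          _ ≤ q * S' := by
              apply mul_le_mul_left
              rw [lint_sub_aux]
              rw [setLIntegral_congr (Ico_ae_eq_Ioc)]
              rw [hqdef]
              apply lintegral_mono_set
              apply Ioc_subset_Ioc le_rfl
              have : ((j:ℝ)+1) * δ = j * δ + δ := by ring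
              linarith [hr1, this]
      -- sup inequality
      have hsup : S' ≤ q * S' := by
        rw [hS']
        apply iSup₂_le
        intro r hr
        by_cases hc : r ≤ j * δ
        · rw [ih r hr.1 hc]; exact zero_le
        · push_neg at hc
          exact hmain r hr.1 hr.2 hc
      have hS0 : S' = 0 := by
        by_contra h0
        have : q * S' < 1 * S' := by
          exact ENNReal.mul_lt_mul_left h0 hS'top hq
        rw [one_mul] at this
        exact absurd (lt_of_le_of_lt hsup this) (lt_irrefl _)
      have htle' : t ≤ ((j:ℝ)+1) * δ := by push_cast at htle ⊢; linarith
      have := hmain t ht htle' hcase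
      rw [hS0, mul_zero] at this
      exact le_antisymm this zero_le
  intro t ht
  obtain ⟨j, hj⟩ := exists_nat_ge (β / δ)
  refine key j t ht ?_
  calc t ≤ β := ht.2
    _ = (β / δ) * δ := by field_simp
    _ ≤ j * δ := by apply mul_le_mul_of_nonneg_right hj hδ.le

lemma locLip_on_Icc {g : ℝ → ℝ} (hg : LocallyLipschitz g) (M : ℝ) (hM : 0 ≤ M) :
    ∃ L : ℝ, 0 ≤ L ∧ ∀ a ∈ Icc (-M) M, ∀ b ∈ Icc (-M) M, |g a - g b| ≤ L * |a - b| := by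
  choose K t ht hlip using hg
  choose ε hε hball using fun x => Metric.mem_nhds_iff.1 (ht x)
  have hcomp : IsCompact (Icc (-M) M) := isCompact_Icc
  have hne : (-M) ∈ Icc (-M) M := ⟨le_rfl, by linarith⟩
  obtain ⟨s, hscov⟩ := hcomp.elim_nhds_subcover (fun x => Metric.ball x (ε x / 2))
    (fun x _ => Metric.ball_mem_nhds x (by have := hε x; positivity))
  have hsne : s.Nonempty := by
    have := hscov.2 hne
    simp only [mem_iUnion] at this
    obtain ⟨i, hi, -⟩ := this
    exact ⟨i, hi⟩
  set r : ℝ := s.inf' hsne (fun x => ε x / 2) with hr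
  have hrpos : 0 < r := by
    rw [hr, Finset.lt_inf'_iff]
    intro b _
    have := hε b; positivity
  have hgc : Continuous g := LocallyLipschitz.continuous (fun x => ⟨K x, t x, ht x, hlip x⟩)
  obtain ⟨C, hC⟩ := hcomp.exists_bound_of_continuousOn hgc.continuousOn
  have hC0 : 0 ≤ C := le_trans (norm_nonneg _) (hC _ hne)
  set L0 : ℝ := s.sup' hsne (fun x => (K x : ℝ)) with hL0
  have hL00 : 0 ≤ L0 := by
    obtain ⟨i, hi⟩ := hsne
    exact le_trans (K i).coe_nonneg (Finset.le_sup' (fun x => (K x : ℝ)) hi)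
  refine ⟨max L0 (2 * C / r), le_max_of_le_left hL00, ?_⟩
  intro a ha b hb
  rcases lt_or_ge (dist a b) r with hd | hd
  · -- close case
    have := hscov.2 ha
    simp only [mem_iUnion] at this
    obtain ⟨i, hi, hai⟩ := this
    have hri : r ≤ ε i / 2 := Finset.inf'_le _ hi
    have hat : a ∈ t i := hball i (by
      apply Metric.ball_subset_ball (by linarith : ε i / 2 ≤ ε i) hai)
    have hbt : b ∈ t i := hball i (by
      have : dist b i ≤ dist b a + dist a i := dist_triangle _ _ _
      have hai' : dist a i < ε i / 2 := hai
      have : dist b i < ε i := by rw [dist_comm b a] at this; linarith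
      exact this)
    have := (hlip i).dist_le_mul a hat b hbt
    rw [Real.dist_eq, Real.dist_eq] at this
    calc |g a - g b| ≤ (K i : ℝ) * |a - b| := this
      _ ≤ L0 * |a - b| := by
          apply mul_le_mul_of_nonneg_right _ (abs_nonneg _)
          exact Finset.le_sup' (fun x => (K x : ℝ)) hi
      _ ≤ max L0 (2 * C / r) * |a - b| :=
          mul_le_mul_of_nonneg_right (le_max_left _ _) (abs_nonneg _)
  · -- far case
    have h1 : |g a - g b| ≤ 2 * C := by
      have := hC a ha
      have := hC b hb
      rw [Real.norm_eq_abs] at *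
      calc |g a - g b| ≤ |g a| + |g b| := abs_sub _ _
        _ ≤ 2 * C := by linarith
    have hr' : r ≤ |a - b| := by rwa [Real.dist_eq] at hd
    calc |g a - g b| ≤ 2 * C := h1
      _ = (2 * C / r) * r := by field_simp
      _ ≤ (2 * C / r) * |a - b| := by
          apply mul_le_mul_of_nonneg_left hr' (by positivity)
      _ ≤ max L0 (2 * C / r) * |a - b| :=
          mul_le_mul_of_nonneg_right (le_max_right _ _) (abs_nonneg _)

private lemma my_limsup_add (u v : ℕ → ℝ≥0∞) :
    limsup (fun n => u n + v n) atTop ≤ limsup u atTop + limsup v atTop := by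
  set A := limsup u atTop with hA
  set B := limsup v atTop with hB
  rcases eq_top_or_lt_top (A + B) with h | h
  · rw [h]; exact le_top
  · have hAt : A ≠ ⊤ := fun hc => by simp [hc] at h
    have hBt : B ≠ ⊤ := fun hc => by simp [hc] at h
    refine ENNReal.le_of_forall_pos_le_add fun ε hε _ => ?_
    have hε2 : (ε : ℝ≥0∞) / 2 ≠ 0 := by
      simp only [ne_eq, ENNReal.div_eq_zero_iff]
      push_neg
      exact ⟨by exact_mod_cast hε.ne', by norm_num⟩
    have h1 : ∀ᶠ n in atTop, u n < A + ε/2 :=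
      eventually_lt_of_limsup_lt (ENNReal.lt_add_right hAt hε2)
    have h2 : ∀ᶠ n in atTop, v n < B + ε/2 :=
      eventually_lt_of_limsup_lt (ENNReal.lt_add_right hBt hε2)
    refine limsup_le_of_le (by isBoundedDefault) ?_
    filter_upwards [h1, h2] with n hn1 hn2
    calc u n + v n ≤ (A + ε/2) + (B + ε/2) := add_le_add hn1.le hn2.le
      _ = A + B + (ε/2 + ε/2) := by ring
      _ = A + B + ε := by rw [ENNReal.add_halves]

/-- Stability of the nonlinear Volterra equation under monotone pointwise
approximation of the forcing term: if continuous forcings `fₙ` decrease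
pointwise to a bounded measurable forcing `f`, then the corresponding continuous
solutions `xₙ` converge pointwise to the bounded measurable solution `x`. -/
theorem stmt_7
    (β : ℝ) (hβ : 0 < β)
    (k : ℝ → ℝ) (hk_nonneg : ∀ s, 0 ≤ s → 0 ≤ k s)
    (hk_zero : ∀ s, s < 0 → k s = 0)
    (hk_loc : ∀ b, 0 < b → IntegrableOn k (Icc 0 b))
    (hk_cont : ∀ t₀, 0 < t₀ →
      Tendsto (fun t => ∫ s in Ioi (0:ℝ), |k (t₀ - s) - k (t - s)|) (𝓝 t₀) (𝓝 0))
    (g : ℝ → ℝ) (hg_pos : ∀ x, 0 < g x) (hg_bdd : ∃ C, ∀ x, g x ≤ C)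
    (hg_lip : LocallyLipschitz g)
    (f : ℝ → ℝ) (hf_meas : Measurable f)
    (hf_bdd : ∃ C, ∀ t ∈ Icc (0:ℝ) β, |f t| ≤ C)
    (F : ℕ → ℝ → ℝ)
    (hF_cont : ∀ n, ContinuousOn (F n) (Icc 0 β))
    (hF_bdd : ∀ n, ∃ C, ∀ t ∈ Icc (0:ℝ) β, |F n t| ≤ C)
    (hF_anti : ∀ n, ∀ t ∈ Icc (0:ℝ) β, F (n + 1) t ≤ F n t)
    (hF_lim : ∀ t ∈ Icc (0:ℝ) β, Tendsto (fun n => F n t) atTop (𝓝 (f t)))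
    (X : ℕ → ℝ → ℝ)
    (hX_cont : ∀ n, ContinuousOn (X n) (Icc 0 β))
    (hX_eq : ∀ n, ∀ t ∈ Icc (0:ℝ) β,
      X n t = F n t + ∫ s in (0:ℝ)..t, k (t - s) * g (X n s))
    (x : ℝ → ℝ) (hx_meas : Measurable x)
    (hx_bdd : ∃ C, ∀ t ∈ Icc (0:ℝ) β, |x t| ≤ C)
    (hx_eq : ∀ t ∈ Icc (0:ℝ) β, x t = f t + ∫ s in (0:ℝ)..t, k (t - s) * g (x s)) :
    ∀ t ∈ Icc (0:ℝ) β, Tendsto (fun n => X n t) atTop (𝓝 (x t)) := by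
  classical
  obtain ⟨Cg, hCg⟩ := hg_bdd
  obtain ⟨Cx, hCx⟩ := hx_bdd
  obtain ⟨C0, hC0⟩ := hF_bdd 0
  obtain ⟨Cf, hCf⟩ := hf_bdd
  have hgc : Continuous g := hg_lip.continuous
  have hg0 : ∀ z, 0 ≤ g z := fun z => (hg_pos z).le
  have hCg0 : 0 ≤ Cg := le_trans (hg0 0) (hCg 0)
  -- kernel integrability
  have kI : IntegrableOn k (Icc 0 β) := hk_loc β hβ
  have kII : IntervalIntegrable k volume 0 β := by
    rw [intervalIntegrable_iff_integrableOn_Ioc_of_le hβ.le]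
    exact kI.mono_set Ioc_subset_Icc_self
  have ksub : ∀ t ∈ Icc (0:ℝ) β, IntervalIntegrable (fun s => k (t - s)) volume 0 t := by
    intro t ht
    have h1 : IntervalIntegrable k volume 0 t := kII.mono_set
      (by rw [uIcc_of_le ht.1, uIcc_of_le hβ.le]; exact Icc_subset_Icc le_rfl ht.2)
    simpa using (h1.comp_sub_left t).symm
  -- clamp
  set c : ℝ → ℝ := fun s => max 0 (min s β) with hc
  have hcmem : ∀ s, c s ∈ Icc (0:ℝ) β := fun s =>
    ⟨le_max_left _ _, max_le hβ.le (min_le_right _ _)⟩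
  have hceq : ∀ s ∈ Icc (0:ℝ) β, c s = s := by
    intro s hs
    rw [hc]
    simp only [min_eq_left hs.2, max_eq_right hs.1]
  set Y : ℕ → ℝ → ℝ := fun n s => X n (c s) with hYdef
  have hYc : ∀ n, Continuous (Y n) := fun n =>
    (hX_cont n).comp_continuous
      (continuous_const.max (continuous_id.min continuous_const)) hcmem
  have hYX : ∀ n, ∀ s ∈ Icc (0:ℝ) β, Y n s = X n s := by
    intro n s hs
    rw [hYdef]
    simp only [hceq s hs]
  -- generic interval integrability of bounded products with the kernel
  have hII : ∀ t ∈ Icc (0:ℝ) β, ∀ (φ : ℝ → ℝ) (B : ℝ),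
      AEStronglyMeasurable φ (volume.restrict (Ioc 0 t)) →
      (∀ s ∈ Ioc (0:ℝ) t, |φ s| ≤ B) →
      IntervalIntegrable (fun s => k (t - s) * φ s) volume 0 t := by
    intro t ht φ B hm hb
    rw [intervalIntegrable_iff_integrableOn_Ioc_of_le ht.1]
    have hk' : IntegrableOn (fun s => k (t - s)) (Ioc 0 t) := by
      have := ksub t ht
      rwa [intervalIntegrable_iff_integrableOn_Ioc_of_le ht.1] at this
    have h2 : IntegrableOn (fun s => φ s * k (t - s)) (Ioc 0 t) :=
      Integrable.bdd_mul hk' hm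
        ((ae_restrict_iff' measurableSet_Ioc).2 (Filter.Eventually.of_forall
          (fun s hs => by rw [Real.norm_eq_abs]; exact hb s hs)))
    exact h2.congr (Filter.Eventually.of_forall fun s => mul_comm _ _)
  have hIYn : ∀ n, ∀ t ∈ Icc (0:ℝ) β,
      IntervalIntegrable (fun s => k (t - s) * g (Y n s)) volume 0 t := by
    intro n t ht
    refine hII t ht _ Cg ((hgc.comp (hYc n)).aestronglyMeasurable.restrict) ?_
    intro s _
    rw [abs_of_nonneg (hg0 _)]
    exact hCg _
  have hIx : ∀ t ∈ Icc (0:ℝ) β,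
      IntervalIntegrable (fun s => k (t - s) * g (x s)) volume 0 t := by
    intro t ht
    refine hII t ht _ Cg
      ((hgc.measurable.comp hx_meas).aestronglyMeasurable.restrict) ?_
    intro s _
    rw [abs_of_nonneg (hg0 _)]
    exact hCg _
  -- bounds on the integral terms
  set K : ℝ := ∫ s in (0:ℝ)..β, k s with hK
  have hK0 : 0 ≤ K := intervalIntegral.integral_nonneg hβ.le fun u hu => hk_nonneg u hu.1
  have hbound : ∀ t ∈ Icc (0:ℝ) β, ∀ (φ : ℝ → ℝ),
      IntervalIntegrable (fun s => k (t - s) * φ s) volume 0 t →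
      (∀ s ∈ Icc (0:ℝ) t, 0 ≤ φ s ∧ φ s ≤ Cg) →
      0 ≤ (∫ s in (0:ℝ)..t, k (t - s) * φ s) ∧
        (∫ s in (0:ℝ)..t, k (t - s) * φ s) ≤ Cg * K := by
    intro t ht φ hint hb
    constructor
    · apply intervalIntegral.integral_nonneg ht.1
      intro u hu
      exact mul_nonneg (hk_nonneg _ (by linarith [hu.2])) (hb u hu).1
    · have h1 : (∫ s in (0:ℝ)..t, k (t - s) * φ s) ≤ ∫ s in (0:ℝ)..t, k (t - s) * Cg := by
        apply intervalIntegral.integral_mono_on ht.1 hint ((ksub t ht).mul_const Cg)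
        intro s hs
        exact mul_le_mul_of_nonneg_left (hb s hs).2 (hk_nonneg _ (by linarith [hs.2]))
      have h2 : (∫ s in (0:ℝ)..t, k (t - s) * Cg) = Cg * ∫ s in (0:ℝ)..t, k (t - s) := by
        rw [intervalIntegral.integral_mul_const]
        ring
      have h3 : (∫ s in (0:ℝ)..t, k (t - s)) = ∫ u in (0:ℝ)..t, k u := by
        have := intervalIntegral.integral_comp_sub_left (a := (0:ℝ)) (b := t) k t
        simpa using this
      have h4 : (∫ u in (0:ℝ)..t, k u) ≤ K := by
        rw [hK]
        apply intervalIntegral.integral_mono_interval le_rfl ht.1 ht.2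
        · exact (ae_restrict_iff' measurableSet_Ioc).2
            (Filter.Eventually.of_forall fun u hu => hk_nonneg u hu.1.le)
        · exact kII
      calc (∫ s in (0:ℝ)..t, k (t - s) * φ s) ≤ Cg * ∫ s in (0:ℝ)..t, k (t - s) := by
            rw [← h2]; exact h1
        _ = Cg * ∫ u in (0:ℝ)..t, k u := by rw [h3]
        _ ≤ Cg * K := mul_le_mul_of_nonneg_left h4 hCg0
  -- monotonicity of F in n, and f ≤ F n
  have hmono : ∀ t ∈ Icc (0:ℝ) β, ∀ n m, n ≤ m → F m t ≤ F n t := by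
    intro t ht n m hnm
    induction hnm with
    | refl => exact le_rfl
    | step h ih => exact le_trans (hF_anti _ t ht) ih
  have hfF : ∀ n, ∀ t ∈ Icc (0:ℝ) β, f t ≤ F n t := by
    intro n t ht
    apply le_of_tendsto (hF_lim t ht)
    filter_upwards [eventually_ge_atTop n] with m hm
    exact hmono t ht n m hm
  have hFb : ∀ n, ∀ t ∈ Icc (0:ℝ) β, |F n t| ≤ max C0 Cf := by
    intro n t ht
    rw [abs_le]
    constructor
    · have h1 := hfF n t ht
      have h2 := hCf t ht
      rw [abs_le] at h2
      have := le_max_right C0 Cf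
      linarith [h2.1]
    · have h1 := hmono t ht 0 n (Nat.zero_le n)
      have h2 := hC0 t ht
      have h3 := le_abs_self (F 0 t)
      have := le_max_left C0 Cf
      linarith
  -- uniform bound on solutions
  set M1 : ℝ := max C0 Cf + Cg * K with hM1
  have hcongrY : ∀ n, ∀ t ∈ Icc (0:ℝ) β,
      (∫ s in (0:ℝ)..t, k (t - s) * g (X n s)) = ∫ s in (0:ℝ)..t, k (t - s) * g (Y n s) := by
    intro n t ht
    apply intervalIntegral.integral_congr
    intro s hs
    rw [uIcc_of_le ht.1] at hs
    show k (t - s) * g (X n s) = k (t - s) * g (Y n s)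
    rw [hYX n s ⟨hs.1, hs.2.trans ht.2⟩]
  have hXb : ∀ n, ∀ t ∈ Icc (0:ℝ) β, |X n t| ≤ M1 := by
    intro n t ht
    rw [hX_eq n t ht, hcongrY n t ht]
    have hb := hbound t ht (fun s => g (Y n s)) (hIYn n t ht) (fun s _ => ⟨hg0 _, hCg _⟩)
    calc |F n t + ∫ s in (0:ℝ)..t, k (t - s) * g (Y n s)|
        ≤ |F n t| + |∫ s in (0:ℝ)..t, k (t - s) * g (Y n s)| := abs_add_le _ _
      _ ≤ max C0 Cf + Cg * K := add_le_add (hFb n t ht)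
          (by rw [abs_of_nonneg hb.1]; exact hb.2)
  set M : ℝ := max M1 Cx with hM
  have hXM : ∀ n, ∀ t ∈ Icc (0:ℝ) β, X n t ∈ Icc (-M) M := by
    intro n t ht
    have := (hXb n t ht).trans (le_max_left M1 Cx)
    rw [abs_le] at this
    exact this
  have hxM : ∀ t ∈ Icc (0:ℝ) β, x t ∈ Icc (-M) M := by
    intro t ht
    have := (hCx t ht).trans (le_max_right M1 Cx)
    rw [abs_le] at this
    exact this
  have hM0 : 0 ≤ M := le_trans (abs_nonneg (x 0)) ((hCx 0 ⟨le_rfl, hβ.le⟩).trans (le_max_right M1 Cx))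
  obtain ⟨L, hL0, hL⟩ := locLip_on_Icc hg_lip M hM0
  -- distance function
  set D : ℕ → ℝ → ℝ := fun n s => |Y n s - x s| with hD
  have hDmeas : ∀ n, Measurable (D n) := fun n => ((hYc n).measurable.sub hx_meas).abs
  have hDb : ∀ n, ∀ s ∈ Icc (0:ℝ) β, D n s ≤ 2 * M := by
    intro n s hs
    have h1 : D n s ≤ |Y n s| + |x s| := abs_sub _ _
    have h2 : |Y n s| ≤ M := by rw [hYX n s hs]; exact (hXb n s hs).trans (le_max_left M1 Cx)
    have h3 : |x s| ≤ M := (hCx s hs).trans (le_max_right M1 Cx)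
    linarith
  have hD0 : ∀ n s, 0 ≤ D n s := fun n s => abs_nonneg _
  -- key real inequality
  have hIDn : ∀ n, ∀ t ∈ Icc (0:ℝ) β,
      IntervalIntegrable (fun s => k (t - s) * (L * D n s)) volume 0 t := by
    intro n t ht
    refine hII t ht _ (L * (2 * M)) (((hDmeas n).const_mul L).aestronglyMeasurable.restrict) ?_
    intro s hs
    rw [abs_of_nonneg (mul_nonneg hL0 (hD0 n s))]
    exact mul_le_mul_of_nonneg_left (hDb n s ⟨hs.1.le, hs.2.trans ht.2⟩) hL0
  have hkey : ∀ n, ∀ t ∈ Icc (0:ℝ) β,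
      D n t ≤ (F n t - f t) + ∫ s in (0:ℝ)..t, k (t - s) * (L * D n s) := by
    intro n t ht
    have hDt : D n t = |X n t - x t| := by rw [hD]; simp only [hYX n t ht]
    have e1 : X n t - x t = (F n t - f t) +
        ((∫ s in (0:ℝ)..t, k (t - s) * g (Y n s)) - ∫ s in (0:ℝ)..t, k (t - s) * g (x s)) := by
      rw [hX_eq n t ht, hx_eq t ht, hcongrY n t ht]
      ring
    have hsub : (∫ s in (0:ℝ)..t, k (t - s) * g (Y n s)) - (∫ s in (0:ℝ)..t, k (t - s) * g (x s))
        = ∫ s in (0:ℝ)..t, (k (t - s) * g (Y n s) - k (t - s) * g (x s)) :=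
      (intervalIntegral.integral_sub (hIYn n t ht) (hIx t ht)).symm
    have habs2 : |∫ s in (0:ℝ)..t, (k (t - s) * g (Y n s) - k (t - s) * g (x s))|
        ≤ ∫ s in (0:ℝ)..t, |k (t - s) * g (Y n s) - k (t - s) * g (x s)| := by
      have := intervalIntegral.norm_integral_le_integral_norm
        (f := fun s => k (t - s) * g (Y n s) - k (t - s) * g (x s)) (μ := volume) ht.1
      simpa [Real.norm_eq_abs] using this
    have hmono2 : (∫ s in (0:ℝ)..t, |k (t - s) * g (Y n s) - k (t - s) * g (x s)|)
        ≤ ∫ s in (0:ℝ)..t, k (t - s) * (L * D n s) := by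
      apply intervalIntegral.integral_mono_on ht.1
        (((hIYn n t ht).sub (hIx t ht)).abs)
        (hIDn n t ht)
      intro s hs
      have hsβ : s ∈ Icc (0:ℝ) β := ⟨hs.1, hs.2.trans ht.2⟩
      have hknn : 0 ≤ k (t - s) := hk_nonneg _ (by linarith [hs.2])
      have hYM : Y n s ∈ Icc (-M) M := by rw [hYX n s hsβ]; exact hXM n s hsβ
      calc |k (t - s) * g (Y n s) - k (t - s) * g (x s)|
          = k (t - s) * |g (Y n s) - g (x s)| := by
            rw [← mul_sub, abs_mul, abs_of_nonneg hknn]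
        _ ≤ k (t - s) * (L * D n s) := by
            apply mul_le_mul_of_nonneg_left _ hknn
            exact hL (Y n s) hYM (x s) (hxM s hsβ)
    rw [hDt, e1]
    calc |(F n t - f t) + ((∫ s in (0:ℝ)..t, k (t - s) * g (Y n s))
            - ∫ s in (0:ℝ)..t, k (t - s) * g (x s))|
        ≤ |F n t - f t| + |(∫ s in (0:ℝ)..t, k (t - s) * g (Y n s))
            - ∫ s in (0:ℝ)..t, k (t - s) * g (x s)| := abs_add_le _ _
      _ ≤ (F n t - f t) + ∫ s in (0:ℝ)..t, k (t - s) * (L * D n s) := by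
          apply add_le_add
          · rw [abs_of_nonneg (sub_nonneg.2 (hfF n t ht))]
          · rw [hsub]
            exact le_trans habs2 hmono2
  -- measurable modification of the kernel
  have hkae : AEMeasurable k volume := by
    have h1 : AEMeasurable k (volume.restrict (Ici 0)) := by
      have hU : Ici (0:ℝ) = ⋃ n : ℕ, Icc 0 ((n:ℝ)+1) := by
        ext z
        simp only [mem_Ici, mem_iUnion, mem_Icc]
        constructor
        · intro hz
          obtain ⟨n, hn⟩ := exists_nat_ge z
          exact ⟨n, hz, by linarith⟩
        · rintro ⟨n, hn, -⟩
          exact hn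
      rw [hU, aemeasurable_iUnion_iff]
      intro n
      exact (hk_loc ((n:ℝ)+1) (by positivity)).aemeasurable
    have h2 : AEMeasurable k (volume.restrict (Iio 0)) := by
      refine (aemeasurable_const (b := (0:ℝ))).congr ?_
      exact (ae_restrict_iff' measurableSet_Iio).2
        (Filter.Eventually.of_forall fun s hs => (hk_zero s hs).symm)
    have hdecomp : volume.restrict (Ici (0:ℝ)) + volume.restrict (Ici (0:ℝ))ᶜ = volume :=
      Measure.restrict_add_restrict_compl (measurableSet_Ici)
    rw [← hdecomp]
    rw [aemeasurable_add_measure_iff]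
    refine ⟨h1, ?_⟩
    rwa [compl_Ici]
  set k' : ℝ → ℝ := hkae.mk k with hk'def
  have hk'm : Measurable k' := hkae.measurable_mk
  have hkk' : k =ᵐ[volume] k' := hkae.ae_eq_mk
  -- ENNReal kernel
  set κ : ℝ → ℝ≥0∞ := fun u => ENNReal.ofReal (L * k' u) with hκdef
  have hκm : Measurable κ := ENNReal.measurable_ofReal.comp (hk'm.const_mul L)
  have hκfin : ∫⁻ u in Ioc (0:ℝ) β, κ u ≠ ⊤ := by
    have hLk : IntegrableOn (fun u => L * k u) (Ioc 0 β) :=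
      (kI.mono_set Ioc_subset_Icc_self).const_mul L
    have hcg : ∫⁻ u in Ioc (0:ℝ) β, κ u = ∫⁻ u in Ioc (0:ℝ) β, ENNReal.ofReal (L * k u) := by
      apply lintegral_congr_ae
      filter_upwards [ae_restrict_of_ae hkk'] with u hu
      rw [hκdef, hu]
    rw [hcg]
    exact hLk.lintegral_lt_top.ne
  -- ENNReal distance and limsup
  set W : ℕ → ℝ → ℝ≥0∞ := fun n t => ENNReal.ofReal (D n t) with hWdef
  set V : ℝ → ℝ≥0∞ := fun t => limsup (fun n => W n t) atTop with hVdef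
  have hWm : ∀ n, Measurable (W n) := fun n => ENNReal.measurable_ofReal.comp (hDmeas n)
  have hWb : ∀ n, ∀ t ∈ Icc (0:ℝ) β, W n t ≤ ENNReal.ofReal (2*M) := by
    intro n t ht
    exact ENNReal.ofReal_le_ofReal (hDb n t ht)
  have hVS : ∀ t ∈ Icc (0:ℝ) β, V t ≤ ENNReal.ofReal (2*M) := by
    intro t ht
    exact limsup_le_of_le (by isBoundedDefault)
      (Filter.Eventually.of_forall fun n => hWb n t ht)
  have hae_k : ∀ t : ℝ, (fun s => k (t - s)) =ᵐ[volume] (fun s => k' (t - s)) := by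
    intro t
    exact (Measure.measurePreserving_sub_left volume t).quasiMeasurePreserving.ae_eq_comp hkk'
  -- master inequality for V
  have hVle : ∀ t ∈ Icc (0:ℝ) β, V t ≤ ∫⁻ s in Ioc (0:ℝ) t, κ (t - s) * V s := by
    intro t ht
    have hstep : ∀ n, W n t ≤ ENNReal.ofReal (F n t - f t)
        + ∫⁻ s in Ioc (0:ℝ) t, κ (t - s) * W n s := by
      intro n
      have h1 := hkey n t ht
      have h2 : W n t ≤ ENNReal.ofReal ((F n t - f t)
          + ∫ s in (0:ℝ)..t, k (t - s) * (L * D n s)) := ENNReal.ofReal_le_ofReal h1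
      refine h2.trans (ENNReal.ofReal_add_le.trans ?_)
      apply add_le_add_right
      have hInt : IntegrableOn (fun s => k (t - s) * (L * D n s)) (Ioc 0 t) := by
        have := hIDn n t ht
        rwa [intervalIntegrable_iff_integrableOn_Ioc_of_le ht.1] at this
      rw [intervalIntegral.integral_of_le ht.1]
      rw [MeasureTheory.ofReal_integral_eq_lintegral_ofReal hInt
        ((ae_restrict_iff' measurableSet_Ioc).2 (Filter.Eventually.of_forall fun s hs =>
          mul_nonneg (hk_nonneg _ (by linarith [hs.2])) (mul_nonneg hL0 (hD0 n s))))]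
      apply le_of_eq
      apply lintegral_congr_ae
      filter_upwards [ae_restrict_of_ae (hae_k t), ae_restrict_mem measurableSet_Ioc]
        with s hs1 hs2
      have hknn : 0 ≤ L * k (t - s) :=
        mul_nonneg hL0 (hk_nonneg _ (by linarith [hs2.2]))
      show ENNReal.ofReal (k (t - s) * (L * D n s))
          = ENNReal.ofReal (L * k' (t - s)) * ENNReal.ofReal (D n s)
      rw [← hs1, show k (t - s) * (L * D n s) = (L * k (t - s)) * D n s by ring,
        ENNReal.ofReal_mul hknn]
    have hεlim : Tendsto (fun n => ENNReal.ofReal (F n t - f t)) atTop (𝓝 0) := by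
      have h0 : Tendsto (fun n => F n t - f t) atTop (𝓝 0) := by
        simpa using (hF_lim t ht).sub_const (f t)
      have := (ENNReal.continuous_ofReal.tendsto 0).comp h0
      simpa [Function.comp_def] using this
    have hGfin : (∫⁻ s in Ioc (0:ℝ) t, κ (t - s) * ENNReal.ofReal (2*M)) ≠ ⊤ := by
      rw [lintegral_mul_const _ (show Measurable fun s : ℝ => κ (t - s) from
        hκm.comp (measurable_const.sub measurable_id))]
      apply ENNReal.mul_ne_top _ ENNReal.ofReal_ne_top
      have hsub2 : (∫⁻ s in Ioc (0:ℝ) t, κ (t - s)) = ∫⁻ u in Ico (0:ℝ) t, κ u := by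
        have := lint_sub_aux κ t 0
        simpa using this
      rw [hsub2, setLIntegral_congr (Ico_ae_eq_Ioc)]
      exact ne_top_of_le_ne_top hκfin (lintegral_mono_set (Ioc_subset_Ioc le_rfl ht.2))
    calc V t ≤ limsup (fun n => ENNReal.ofReal (F n t - f t)
            + ∫⁻ s in Ioc (0:ℝ) t, κ (t - s) * W n s) atTop :=
          limsup_le_limsup (Filter.Eventually.of_forall hstep)
      _ ≤ limsup (fun n => ENNReal.ofReal (F n t - f t)) atTop
            + limsup (fun n => ∫⁻ s in Ioc (0:ℝ) t, κ (t - s) * W n s) atTop :=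
          my_limsup_add _ _
      _ = limsup (fun n => ∫⁻ s in Ioc (0:ℝ) t, κ (t - s) * W n s) atTop := by
          rw [hεlim.limsup_eq, zero_add]
      _ ≤ ∫⁻ s in Ioc (0:ℝ) t, limsup (fun n => κ (t - s) * W n s) atTop := by
          apply limsup_lintegral_le (g := fun s => κ (t - s) * ENNReal.ofReal (2*M))
          · intro n
            exact (show Measurable fun s : ℝ => κ (t - s) from
              hκm.comp (measurable_const.sub measurable_id)).mul (hWm n)
          · intro n
            apply (ae_restrict_iff' measurableSet_Ioc).2
            apply Filter.Eventually.of_forall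
            intro s hs
            exact mul_le_mul_right (hWb n s ⟨hs.1.le, hs.2.trans ht.2⟩) _
          · exact hGfin
      _ ≤ ∫⁻ s in Ioc (0:ℝ) t, κ (t - s) * V s := by
          apply lintegral_mono
          intro s
          exact le_of_eq (ENNReal.limsup_const_mul_of_ne_top
            (show κ (t - s) ≠ ⊤ from ENNReal.ofReal_ne_top))
    -- done
  have hzero := gronwallENN β hβ κ hκm hκfin V (ENNReal.ofReal (2*M))
    ENNReal.ofReal_ne_top hVS hVle
  intro t ht
  have hV0 : V t = 0 := hzero t ht
  have hWl : Tendsto (fun n => W n t) atTop (𝓝 0) := by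
    apply tendsto_of_le_liminf_of_limsup_le zero_le hV0.le
  have hDl : Tendsto (fun n => D n t) atTop (𝓝 0) := by
    have h2 : Tendsto (fun n => (W n t).toReal) atTop (𝓝 ((0:ℝ≥0∞)).toReal) :=
      (ENNReal.tendsto_toReal (by simp)).comp hWl
    simp only [ENNReal.toReal_zero] at h2
    have h3 : ∀ n, (W n t).toReal = D n t := fun n => by
      rw [hWdef, ENNReal.toReal_ofReal (hD0 n t)]
    simpa [h3] using h2
  rw [tendsto_iff_dist_tendsto_zero]
  have hdd : ∀ n, dist (X n t) (x t) = D n t := fun n => by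
    rw [Real.dist_eq, hD]
    simp only [hYX n t ht]
  simpa [hdd] using hDl
end

section
/- Let 0 < α < 1, λ > 0, κ > 0, β > 1 and c > 0, and set υ = (1−β)/(β(1−α)), so that ((1−α)υ + 1)β − 1 = 0. Let H(x) = c x^β for x ≥ 0 and H(x) = 0 for x ≤ 0, and take f ≡ 1. For γ > 0, let r_γ : [0,∞) → ℝ be the continuous solution of r_γ(t) = H(κ ∫₀ᵗ λ⁻¹ (t−s)^{−α} (γ − r_γ(s)) ds), and let r₁ be the continuous solution for γ = 1. Then for every γ > 0 and every t ≥ 0, r_γ(t) = γ r₁(γ^{−υ} t). -/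
open MeasureTheory Set Filter Topology


lemma ker_int {α : ℝ} (hα1 : α < 1) (t a b : ℝ) :
    IntervalIntegrable (fun s => (t - s) ^ (-α)) volume a b := by
  simpa using (intervalIntegral.intervalIntegrable_rpow'
    (a := t - a) (b := t - b) (r := -α) (by linarith)).comp_sub_left t

lemma my_int {α lam t a b : ℝ} (hα1 : α < 1) {ψ : ℝ → ℝ}
    (hψ : ContinuousOn ψ (uIcc a b)) :
    IntervalIntegrable (fun s => lam⁻¹ * (t - s) ^ (-α) * ψ s) volume a b := by
  have h : (fun s => lam⁻¹ * (t - s) ^ (-α) * ψ s)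
      = fun s => (t - s) ^ (-α) * (lam⁻¹ * ψ s) := by funext s; ring
  rw [h]
  exact (ker_int hα1 t a b).mul_continuousOn (continuousOn_const.mul hψ)

lemma ker_val {α : ℝ} (hα0 : 0 < α) (hα1 : α < 1) {m t : ℝ} (hm : 0 ≤ m) (hmt : m ≤ t) :
    ∫ s in m..t, (t - s) ^ (-α) = (t - m) ^ (1 - α) / (1 - α) := by
  rw [intervalIntegral.integral_comp_sub_left (fun x => x ^ (-α)) t, sub_self]
  rw [integral_rpow (Or.inl (by linarith))]
  rw [Real.zero_rpow (by linarith)]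
  norm_num
  congr 1 <;> ring

lemma ker_est {α lam : ℝ} (hα0 : 0 < α) (hα1 : α < 1) (hlam : 0 < lam)
    {ψ : ℝ → ℝ} {m t D : ℝ}
    (hm : 0 ≤ m) (hmt : m ≤ t) (hψ : ContinuousOn ψ (uIcc m t))
    (hD : ∀ s ∈ Icc m t, |ψ s| ≤ D) :
    |∫ s in m..t, lam⁻¹ * (t - s) ^ (-α) * ψ s|
      ≤ lam⁻¹ * D * ((t - m) ^ (1 - α) / (1 - α)) := by
  have hint : IntervalIntegrable (fun s => lam⁻¹ * (t - s) ^ (-α) * ψ s) volume m t :=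
    my_int hα1 hψ
  have h1 : |∫ s in m..t, lam⁻¹ * (t - s) ^ (-α) * ψ s|
      ≤ ∫ s in m..t, |lam⁻¹ * (t - s) ^ (-α) * ψ s| :=
    intervalIntegral.abs_integral_le_integral_abs hmt
  have h2 : ∫ s in m..t, |lam⁻¹ * (t - s) ^ (-α) * ψ s|
      ≤ ∫ s in m..t, (t - s) ^ (-α) * (lam⁻¹ * D) := by
    apply intervalIntegral.integral_mono_on hmt hint.abs
      ((ker_int hα1 t m t).mul_const _)
    intro x hx
    have hx2 : (0:ℝ) ≤ t - x := by linarith [hx.2]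
    have hk : (0:ℝ) ≤ (t - x) ^ (-α) := Real.rpow_nonneg hx2 _
    have : |lam⁻¹ * (t - x) ^ (-α) * ψ x| = (t - x) ^ (-α) * (lam⁻¹ * |ψ x|) := by
      rw [abs_mul, abs_mul, abs_of_nonneg hk, abs_of_nonneg (le_of_lt (inv_pos.2 hlam))]
      ring
    rw [this]
    have := hD x hx
    have hl : (0:ℝ) ≤ lam⁻¹ := le_of_lt (inv_pos.2 hlam)
    exact mul_le_mul_of_nonneg_left (mul_le_mul_of_nonneg_left this hl) hk
  have h3 : ∫ s in m..t, (t - s) ^ (-α) * (lam⁻¹ * D)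
      = lam⁻¹ * D * ((t - m) ^ (1 - α) / (1 - α)) := by
    rw [intervalIntegral.integral_mul_const, ker_val hα0 hα1 hm hmt]; ring
  linarith


lemma rpow_lip {β A x y : ℝ} (hβ : 1 ≤ β) (hy : 0 ≤ y) (hyx : y ≤ x) (hxA : x ≤ A) :
    x ^ β - y ^ β ≤ β * A ^ (β - 1) * (x - y) := by
  have hA : (0:ℝ) ≤ A := le_trans (hy.trans hyx) hxA
  have key := (convex_Icc (0:ℝ) A).norm_image_sub_le_of_norm_hasDerivWithin_le
    (f := fun u : ℝ => u ^ β) (f' := fun u : ℝ => β * u ^ (β - 1))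
    (C := β * A ^ (β - 1))
    (fun u _ => (Real.hasDerivAt_rpow_const (Or.inr hβ)).hasDerivWithinAt)
    (fun u hu => by
      rw [Real.norm_eq_abs, abs_mul, abs_of_nonneg (by linarith : (0:ℝ) ≤ β),
        abs_of_nonneg (Real.rpow_nonneg hu.1 _)]
      exact mul_le_mul_of_nonneg_left
        (Real.rpow_le_rpow hu.1 hu.2 (by linarith)) (by linarith))
    (show y ∈ Icc 0 A from ⟨hy, hyx.trans hxA⟩)
    (show x ∈ Icc 0 A from ⟨hy.trans hyx, hxA⟩)
  rw [Real.norm_eq_abs, Real.norm_eq_abs] at key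
  calc x ^ β - y ^ β ≤ |x ^ β - y ^ β| := le_abs_self _
    _ ≤ β * A ^ (β - 1) * |x - y| := key
    _ = β * A ^ (β - 1) * (x - y) := by rw [abs_of_nonneg (by linarith)]

section Hprops
variable {c β : ℝ} {H : ℝ → ℝ}
  (hβ : 1 < β) (hc : 0 < c)
  (hH : ∀ x : ℝ, H x = if 0 ≤ x then c * x ^ β else 0)

include hβ hc hH

lemma H_nonneg (x : ℝ) : 0 ≤ H x := by
  rw [hH]; split
  · exact mul_nonneg hc.le (Real.rpow_nonneg (by assumption) _)
  · exact le_rfl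

lemma H_mono {x y : ℝ} (hxy : x ≤ y) : H x ≤ H y := by
  rw [hH, hH]
  rcases le_or_gt 0 x with hx | hx
  · rw [if_pos hx, if_pos (hx.trans hxy)]
    exact mul_le_mul_of_nonneg_left (Real.rpow_le_rpow hx hxy (by linarith)) hc.le
  · rw [if_neg (not_le.2 hx)]
    split
    · exact mul_nonneg hc.le (Real.rpow_nonneg (by assumption) _)
    · exact le_rfl

lemma H_lip_aux {A x y : ℝ} (hxA : |x| ≤ A) (hyx : y ≤ x) :
    H x - H y ≤ c * β * A ^ (β - 1) * (x - y) := by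
  have hA : 0 ≤ A := (abs_nonneg x).trans hxA
  rcases le_or_gt 0 x with hx | hx
  · have hx' : x ≤ A := (le_abs_self x).trans hxA
    rcases le_or_gt 0 y with hy | hy
    · rw [hH, hH, if_pos hx, if_pos hy]
      have := rpow_lip hβ.le hy hyx hx'
      nlinarith
    · rw [hH, hH, if_pos hx, if_neg (not_le.2 hy)]
      have := rpow_lip hβ.le le_rfl hx hx'
      rw [Real.zero_rpow (by positivity)] at this
      have hprod : (0:ℝ) ≤ c * β * A ^ (β - 1) :=
        mul_nonneg (mul_nonneg hc.le (by linarith)) (Real.rpow_nonneg hA _)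
      nlinarith [mul_le_mul_of_nonneg_left this hc.le]
  · rw [hH, hH, if_neg (not_le.2 hx), if_neg (not_le.2 (lt_of_le_of_lt hyx hx))]
    have hprod : (0:ℝ) ≤ c * β * A ^ (β - 1) :=
      mul_nonneg (mul_nonneg hc.le (by linarith)) (Real.rpow_nonneg hA _)
    nlinarith

lemma H_lip {A x y : ℝ} (hxA : |x| ≤ A) (hyA : |y| ≤ A) :
    |H x - H y| ≤ c * β * A ^ (β - 1) * |x - y| := by
  rcases le_total y x with h | h
  · rw [abs_of_nonneg (by linarith [H_mono hβ hc hH h] : (0:ℝ) ≤ H x - H y),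
      abs_of_nonneg (by linarith : (0:ℝ) ≤ x - y)]
    exact H_lip_aux hβ hc hH hxA h
  · rw [abs_sub_comm, abs_sub_comm x y,
      abs_of_nonneg (by linarith [H_mono hβ hc hH h] : (0:ℝ) ≤ H y - H x),
      abs_of_nonneg (by linarith : (0:ℝ) ≤ y - x)]
    exact H_lip_aux hβ hc hH hyA h

lemma H_scale {k : ℝ} (hk : 0 < k) (x : ℝ) : H (k * x) = k ^ β * H x := by
  rw [hH, hH]
  rcases le_or_gt 0 x with hx | hx
  · rw [if_pos (mul_nonneg hk.le hx), if_pos hx, Real.mul_rpow hk.le hx]; ring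
  · rw [if_neg (not_le.2 (mul_neg_of_pos_of_neg hk hx)), if_neg (not_le.2 hx), mul_zero]

end Hprops

set_option maxHeartbeats 1000000 in
lemma uniq (α lam κ β c γ : ℝ) (hα0 : 0 < α) (hα1 : α < 1) (hlam : 0 < lam)
    (hκ : 0 < κ) (hβ : 1 < β) (hc : 0 < c) (hγ : 0 < γ)
    (H : ℝ → ℝ) (hH : ∀ x : ℝ, H x = if 0 ≤ x then c * x ^ β else 0)
    (p q : ℝ → ℝ) (hpc : ContinuousOn p (Ici 0)) (hqc : ContinuousOn q (Ici 0))
    (hp : ∀ t, 0 ≤ t → p t = H (κ * ∫ s in (0:ℝ)..t, lam⁻¹ * (t - s) ^ (-α) * (γ - p s)))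
    (hq : ∀ t, 0 ≤ t → q t = H (κ * ∫ s in (0:ℝ)..t, lam⁻¹ * (t - s) ^ (-α) * (γ - q s))) :
    ∀ t, 0 ≤ t → p t = q t := by
  intro t₀ ht₀
  set T : ℝ := t₀ + 1 with hTdef
  have hT : 0 < T := by linarith
  have hsub : Icc (0:ℝ) T ⊆ Ici 0 := fun x hx => hx.1
  obtain ⟨Bp, hBp⟩ := (isCompact_Icc (a := (0:ℝ)) (b := T)).exists_bound_of_continuousOn
      (hpc.mono hsub)
  obtain ⟨Bq, hBq⟩ := (isCompact_Icc (a := (0:ℝ)) (b := T)).exists_bound_of_continuousOn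
      (hqc.mono hsub)
  set B : ℝ := max Bp Bq with hBdef
  have hBp' : ∀ s ∈ Icc (0:ℝ) T, |p s| ≤ B := fun s hs =>
    le_trans (by simpa using hBp s hs) (le_max_left _ _)
  have hBq' : ∀ s ∈ Icc (0:ℝ) T, |q s| ≤ B := fun s hs =>
    le_trans (by simpa using hBq s hs) (le_max_right _ _)
  have hB0 : 0 ≤ B := le_trans (abs_nonneg _) (hBp' 0 ⟨le_rfl, hT.le⟩)
  have hTpow : 0 < T ^ (1 - α) := Real.rpow_pos_of_pos hT _
  set A : ℝ := κ * (lam⁻¹ * (γ + B) * (T ^ (1 - α) / (1 - α))) with hAdef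
  have hA : 0 < A := by
    apply mul_pos hκ
    apply mul_pos (mul_pos (inv_pos.2 hlam) (by linarith))
    exact div_pos hTpow (by linarith)
  have argbd : ∀ u : ℝ → ℝ, ContinuousOn u (Ici 0) → (∀ s ∈ Icc (0:ℝ) T, |u s| ≤ B) →
      ∀ t ∈ Icc (0:ℝ) T, |κ * ∫ s in (0:ℝ)..t, lam⁻¹ * (t - s) ^ (-α) * (γ - u s)| ≤ A := by
    intro u huc huB t ht
    have hcont : ContinuousOn (fun s => γ - u s) (uIcc 0 t) := by
      rw [uIcc_of_le ht.1]
      exact continuousOn_const.sub (huc.mono (fun x hx => hx.1))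
    have hD : ∀ s ∈ Icc (0:ℝ) t, |γ - u s| ≤ γ + B := by
      intro s hs
      have h1 := huB s ⟨hs.1, hs.2.trans ht.2⟩
      calc |γ - u s| ≤ |γ| + |u s| := abs_sub _ _
        _ ≤ γ + B := by rw [abs_of_pos hγ]; linarith
    have hest := ker_est hα0 hα1 hlam le_rfl ht.1 hcont hD
    rw [abs_mul, abs_of_pos hκ]
    have h2 : (t - 0) ^ (1 - α) ≤ T ^ (1 - α) :=
      Real.rpow_le_rpow (by linarith [ht.1]) (by linarith [ht.2]) (by linarith)
    rw [hAdef]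
    have h3 : lam⁻¹ * (γ + B) * ((t - 0) ^ (1 - α) / (1 - α))
        ≤ lam⁻¹ * (γ + B) * (T ^ (1 - α) / (1 - α)) := by
      simp only [div_eq_mul_inv]
      exact mul_le_mul_of_nonneg_left
        (mul_le_mul_of_nonneg_right h2 (inv_nonneg.2 (by linarith)))
        (mul_nonneg (inv_pos.2 hlam).le (by linarith))
    exact mul_le_mul_of_nonneg_left (hest.trans h3) hκ.le
  -- Lipschitz constant and step size
  set L : ℝ := c * β * A ^ (β - 1) with hLdef
  have hL : 0 < L := mul_pos (mul_pos hc (by linarith)) (Real.rpow_pos_of_pos hA _)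
  set Cst : ℝ := L * κ * lam⁻¹ / (1 - α) with hCdef
  have hCst : 0 < Cst :=
    div_pos (mul_pos (mul_pos hL hκ) (inv_pos.2 hlam)) (by linarith)
  set δ : ℝ := (2 * Cst)⁻¹ ^ (1 - α)⁻¹ with hδdef
  have hδ : 0 < δ := Real.rpow_pos_of_pos (by positivity) _
  have hδC : Cst * δ ^ (1 - α) = 1 / 2 := by
    rw [hδdef, ← Real.rpow_mul (by positivity),
      inv_mul_cancel₀ (by linarith : (1:ℝ) - α ≠ 0), Real.rpow_one]
    field_simp
  -- main induction
  have key : ∀ n : ℕ, ∀ s, s ∈ Icc (0:ℝ) (min ((n : ℝ) * δ) T) → p s = q s := by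
    intro n
    induction n with
    | zero =>
      intro s hs
      simp only [Nat.cast_zero, zero_mul, min_eq_left hT.le] at hs
      have hs0 : s = 0 := le_antisymm hs.2 hs.1
      subst hs0
      rw [hp 0 le_rfl, hq 0 le_rfl, intervalIntegral.integral_same,
        intervalIntegral.integral_same]
    | succ n ih =>
      intro s₀ hs₀
      push_cast at hs₀
      rcases le_or_gt T ((n : ℝ) * δ) with hTn | hTn
      · apply ih
        rw [min_eq_right hTn]
        rw [min_eq_right (hTn.trans (by nlinarith [hδ.le]))] at hs₀
        exact hs₀
      · set m : ℝ := min ((n : ℝ) * δ) T with hmdef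
        have hm_eq : m = (n : ℝ) * δ := min_eq_left hTn.le
        set M : ℝ := min (((n : ℝ) + 1) * δ) T with hMdef
        have hm0 : 0 ≤ m := le_min (by positivity) hT.le
        have hmM : m ≤ M := min_le_min (by nlinarith [hδ.le]) le_rfl
        have hMT : M ≤ T := min_le_right _ _
        have hMm : M - m ≤ δ := by
          have h1 : M ≤ ((n : ℝ) + 1) * δ := min_le_left _ _
          rw [hm_eq]; nlinarith
        have hne : (Icc (0:ℝ) M).Nonempty := ⟨0, le_rfl, hm0.trans hmM⟩
        have hsubM : Icc (0:ℝ) M ⊆ Ici 0 := fun x hx => hx.1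
        have hdc : ContinuousOn (fun s => |p s - q s|) (Icc 0 M) :=
          ((hpc.mono hsubM).sub (hqc.mono hsubM)).abs
        obtain ⟨z, hzmem, hzmax⟩ := isCompact_Icc.exists_isMaxOn hne hdc
        have hdz : |p z - q z| = 0 := by
          rcases le_or_gt z m with hzm | hzm
          · rw [ih z ⟨hzmem.1, hzm⟩, sub_self, abs_zero]
          · have hz0 : 0 ≤ z := hzmem.1
            have hzT : z ≤ T := hzmem.2.trans hMT
            have hcontp : ContinuousOn (fun s => γ - p s) (uIcc 0 z) := by
              rw [uIcc_of_le hz0]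
              exact continuousOn_const.sub (hpc.mono (fun x hx => hx.1))
            have hcontq : ContinuousOn (fun s => γ - q s) (uIcc 0 z) := by
              rw [uIcc_of_le hz0]
              exact continuousOn_const.sub (hqc.mono (fun x hx => hx.1))
            have hintp := my_int (lam := lam) (t := z) (a := 0) (b := z) hα1 hcontp
            have hintq := my_int (lam := lam) (t := z) (a := 0) (b := z) hα1 hcontq
            have hIpA := argbd p hpc hBp' z ⟨hz0, hzT⟩
            have hIqA := argbd q hqc hBq' z ⟨hz0, hzT⟩
            have hlip : |p z - q z| ≤ L *
                |(κ * ∫ s in (0:ℝ)..z, lam⁻¹ * (z - s) ^ (-α) * (γ - p s)) -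
                 (κ * ∫ s in (0:ℝ)..z, lam⁻¹ * (z - s) ^ (-α) * (γ - q s))| := by
              rw [hp z hz0, hq z hz0]
              exact H_lip hβ hc hH hIpA hIqA
            have hcontd : ContinuousOn (fun s => q s - p s) (Ici 0) :=
              (hqc.sub hpc)
            have hdiff : (κ * ∫ s in (0:ℝ)..z, lam⁻¹ * (z - s) ^ (-α) * (γ - p s)) -
                 (κ * ∫ s in (0:ℝ)..z, lam⁻¹ * (z - s) ^ (-α) * (γ - q s))
                = κ * ∫ s in (0:ℝ)..z, lam⁻¹ * (z - s) ^ (-α) * (q s - p s) := by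
              rw [← mul_sub, ← intervalIntegral.integral_sub hintp hintq]
              congr 1
              apply intervalIntegral.integral_congr
              intro x _
              ring
            have hcd1 : ContinuousOn (fun s => q s - p s) (uIcc 0 m) := by
              rw [uIcc_of_le hm0]
              exact hcontd.mono (fun x hx => hx.1)
            have hcd2 : ContinuousOn (fun s => q s - p s) (uIcc m z) := by
              rw [uIcc_of_le hzm.le]
              exact hcontd.mono (fun x hx => hm0.trans hx.1)
            have hint1 := my_int (lam := lam) (t := z) (a := 0) (b := m) hα1 hcd1
            have hint2 := my_int (lam := lam) (t := z) (a := m) (b := z) hα1 hcd2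
            have hsplit := intervalIntegral.integral_add_adjacent_intervals hint1 hint2
            have hzero : (∫ s in (0:ℝ)..m, lam⁻¹ * (z - s) ^ (-α) * (q s - p s)) = 0 := by
              rw [intervalIntegral.integral_congr (g := fun _ => (0:ℝ)) ?_,
                intervalIntegral.integral_zero]
              intro x hx
              rw [uIcc_of_le hm0] at hx
              show lam⁻¹ * (z - x) ^ (-α) * (q x - p x) = 0
              rw [ih x ⟨hx.1, hx.2⟩]
              ring
            have hbd2 : |∫ s in m..z, lam⁻¹ * (z - s) ^ (-α) * (q s - p s)|
                ≤ lam⁻¹ * |p z - q z| * ((z - m) ^ (1 - α) / (1 - α)) := by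
              apply ker_est hα0 hα1 hlam hm0 hzm.le hcd2
              intro s hs
              rw [abs_sub_comm]
              exact hzmax ⟨hm0.trans hs.1, hs.2.trans hzmem.2⟩
            have h1 : |(κ * ∫ s in (0:ℝ)..z, lam⁻¹ * (z - s) ^ (-α) * (γ - p s)) -
                 (κ * ∫ s in (0:ℝ)..z, lam⁻¹ * (z - s) ^ (-α) * (γ - q s))|
                ≤ κ * (lam⁻¹ * |p z - q z| * ((z - m) ^ (1 - α) / (1 - α))) := by
              rw [hdiff, ← hsplit, hzero, zero_add, abs_mul, abs_of_pos hκ]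
              exact mul_le_mul_of_nonneg_left hbd2 hκ.le
            have h2 : (z - m) ^ (1 - α) ≤ δ ^ (1 - α) :=
              Real.rpow_le_rpow (by linarith) (by linarith [hzmem.2]) (by linarith)
            have h3 : |p z - q z| ≤ Cst * ((z - m) ^ (1 - α)) * |p z - q z| := by
              have := mul_le_mul_of_nonneg_left h1 hL.le
              calc |p z - q z| ≤ L * |(κ * ∫ s in (0:ℝ)..z, lam⁻¹ * (z - s) ^ (-α) * (γ - p s)) -
                 (κ * ∫ s in (0:ℝ)..z, lam⁻¹ * (z - s) ^ (-α) * (γ - q s))| := hlip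
                _ ≤ L * (κ * (lam⁻¹ * |p z - q z| * ((z - m) ^ (1 - α) / (1 - α)))) := this
                _ = Cst * ((z - m) ^ (1 - α)) * |p z - q z| := by
                    rw [hCdef]; ring
            have h4 : Cst * ((z - m) ^ (1 - α)) * |p z - q z|
                ≤ Cst * δ ^ (1 - α) * |p z - q z| :=
              mul_le_mul_of_nonneg_right (mul_le_mul_of_nonneg_left h2 hCst.le) (abs_nonneg _)
            have h5 : Cst * δ ^ (1 - α) * |p z - q z| = |p z - q z| / 2 := by
              rw [hδC]; ring
            have h6 : |p z - q z| ≤ 0 := by linarith [abs_nonneg (p z - q z)]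
            exact le_antisymm h6 (abs_nonneg _)
        have hle : |p s₀ - q s₀| ≤ 0 := hdz ▸ hzmax hs₀
        have := abs_nonneg (p s₀ - q s₀)
        have heq0 : p s₀ - q s₀ = 0 := abs_eq_zero.1 (le_antisymm hle this)
        linarith
  obtain ⟨n, hn⟩ := exists_nat_ge (T / δ)
  have hnδ : T ≤ (n : ℝ) * δ := by
    rw [div_le_iff₀ hδ] at hn
    linarith
  exact key n t₀ ⟨ht₀, by rw [min_eq_right hnδ]; linarith⟩

/-- Self-similarity of the solution of the impact Volterra equation with
power-law nonlinearity `H(x) = c x₊^β` and constant profile `f ≡ 1`: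
`r_γ(t) = γ r₁(γ^{−υ} t)` with `υ = (1−β)/(β(1−α))`. -/
theorem stmt_14
    (α lam κ β c : ℝ) (hα0 : 0 < α) (hα1 : α < 1) (hlam : 0 < lam)
    (hκ : 0 < κ) (hβ : 1 < β) (hc : 0 < c)
    (υ : ℝ) (hυ : υ = (1 - β) / (β * (1 - α)))
    (H : ℝ → ℝ) (hH : ∀ x : ℝ, H x = if 0 ≤ x then c * x ^ β else 0)
    (r : ℝ → ℝ → ℝ)
    (hr_cont : ∀ γ, 0 < γ → ContinuousOn (r γ) (Ici 0))
    (hr_eq : ∀ γ, 0 < γ → ∀ t, 0 ≤ t →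
      r γ t = H (κ * ∫ s in (0:ℝ)..t, lam⁻¹ * (t - s) ^ (-α) * (γ - r γ s))) :
    ∀ γ, 0 < γ → ∀ t, 0 ≤ t → r γ t = γ * r 1 (γ ^ (-υ) * t) := by
  intro γ hγ t ht
  set a : ℝ := γ ^ (-υ) with hadef
  have ha : 0 < a := Real.rpow_pos_of_pos hγ _
  set q : ℝ → ℝ := fun t => γ * r 1 (a * t) with hqdef
  have hq_cont : ContinuousOn q (Ici 0) := by
    apply ContinuousOn.mul continuousOn_const
    exact (hr_cont 1 one_pos).comp ((continuous_const.mul continuous_id).continuousOn)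
      (fun x hx => mul_nonneg ha.le hx)
  have hk' : (0:ℝ) < a ^ (α - 1) * γ := mul_pos (Real.rpow_pos_of_pos ha _) hγ
  have hkβ : (a ^ (α - 1) * γ) ^ β = γ := by
    rw [hadef, ← Real.rpow_mul hγ.le]
    nth_rewrite 2 [show γ = γ ^ (1:ℝ) by rw [Real.rpow_one]]
    rw [← Real.rpow_add hγ, ← Real.rpow_mul hγ.le]
    have hexp : (-υ * (α - 1) + 1) * β = 1 := by
      rw [hυ]
      have hβ0 : β ≠ 0 := by linarith
      have hα0' : (1:ℝ) - α ≠ 0 := by linarith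
      field_simp
      ring
    rw [hexp, Real.rpow_one]
  have hq_eq : ∀ s, 0 ≤ s → q s =
      H (κ * ∫ u in (0:ℝ)..s, lam⁻¹ * (s - u) ^ (-α) * (γ - q u)) := by
    intro s hs
    have hat : 0 ≤ a * s := mul_nonneg ha.le hs
    have e1 : (∫ u in (0:ℝ)..s, lam⁻¹ * (s - u) ^ (-α) * (γ - q u))
        = ∫ u in (0:ℝ)..s,
            (fun v => lam⁻¹ * (a⁻¹ * (a * s - v)) ^ (-α) * (γ - γ * r 1 v)) (a * u) := by
      apply intervalIntegral.integral_congr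
      intro x _
      show lam⁻¹ * (s - x) ^ (-α) * (γ - q x)
          = lam⁻¹ * (a⁻¹ * (a * s - a * x)) ^ (-α) * (γ - γ * r 1 (a * x))
      have hax : a⁻¹ * (a * s - a * x) = s - x := by field_simp
      rw [hax, hqdef]
    have e2 : (∫ u in (0:ℝ)..s,
            (fun v => lam⁻¹ * (a⁻¹ * (a * s - v)) ^ (-α) * (γ - γ * r 1 v)) (a * u))
        = a⁻¹ * ∫ v in (0:ℝ)..(a * s),
            lam⁻¹ * (a⁻¹ * (a * s - v)) ^ (-α) * (γ - γ * r 1 v) := by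
      have h := intervalIntegral.integral_comp_mul_left (a := (0:ℝ)) (b := s) (c := a)
        (fun v => lam⁻¹ * (a⁻¹ * (a * s - v)) ^ (-α) * (γ - γ * r 1 v)) (ne_of_gt ha)
      rw [mul_zero] at h
      rw [h, smul_eq_mul]
    have e3 : (∫ v in (0:ℝ)..(a * s),
            lam⁻¹ * (a⁻¹ * (a * s - v)) ^ (-α) * (γ - γ * r 1 v))
        = a ^ α * γ * ∫ v in (0:ℝ)..(a * s),
            lam⁻¹ * (a * s - v) ^ (-α) * (1 - r 1 v) := by
      rw [← intervalIntegral.integral_const_mul]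
      apply intervalIntegral.integral_congr
      intro x hx
      rw [uIcc_of_le hat] at hx
      show lam⁻¹ * (a⁻¹ * (a * s - x)) ^ (-α) * (γ - γ * r 1 x)
          = a ^ α * γ * (lam⁻¹ * (a * s - x) ^ (-α) * (1 - r 1 x))
      rw [Real.mul_rpow (inv_nonneg.2 ha.le) (by linarith [hx.2] : (0:ℝ) ≤ a * s - x),
        Real.inv_rpow ha.le, ← Real.rpow_neg ha.le, neg_neg]
      ring
    have haa : a⁻¹ * a ^ α = a ^ (α - 1) := by
      rw [← Real.rpow_neg_one a, ← Real.rpow_add ha]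
      congr 1
      ring
    have earg : κ * (a⁻¹ * (a ^ α * γ *
          ∫ v in (0:ℝ)..(a * s), lam⁻¹ * (a * s - v) ^ (-α) * (1 - r 1 v)))
        = (a ^ (α - 1) * γ) * (κ *
          ∫ v in (0:ℝ)..(a * s), lam⁻¹ * (a * s - v) ^ (-α) * (1 - r 1 v)) := by
      rw [← haa]; ring
    rw [hqdef]
    show γ * r 1 (a * s) = _
    rw [e1, e2, e3, earg, H_scale hβ hc hH hk', hkβ, hr_eq 1 one_pos (a * s) hat]
  have := uniq α lam κ β c γ hα0 hα1 hlam hκ hβ hc hγ H hH (r γ) q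
    (hr_cont γ hγ) hq_cont (hr_eq γ hγ) hq_eq t ht
  rw [this, hqdef]
end

section
/- Let 0 < α < 1 and δ > 0. Let g : [0,δ] → ℝ be continuous and nonincreasing with g(δ) = 0 and g(x) > 0 for all 0 ≤ x < δ. Suppose u : [0,∞) → ℝ is continuous, nondecreasing, satisfies 0 ≤ u(t) ≤ δ for all t, and solves u(t) = ∫₀ᵗ (t−s)^{−α} g(u(s)) ds for all t ≥ 0. Then u(t) → δ as t → ∞. -/
open MeasureTheory Set Filter Topology

/-- A bounded nondecreasing continuous solution of the singular Volterra equation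
`u(t) = ∫₀ᵗ (t−s)^{−α} g(u(s)) ds`, with `g` continuous nonincreasing, strictly
positive below `δ` and vanishing at `δ`, converges to `δ` at infinity. -/
theorem stmt_17
    (α δ : ℝ) (hα0 : 0 < α) (hα1 : α < 1) (hδ : 0 < δ)
    (g : ℝ → ℝ) (hg_cont : ContinuousOn g (Icc 0 δ))
    (hg_anti : AntitoneOn g (Icc 0 δ))
    (hgδ : g δ = 0)
    (hg_pos : ∀ x, 0 ≤ x → x < δ → 0 < g x)
    (u : ℝ → ℝ)
    (hu_cont : ContinuousOn u (Ici 0))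
    (hu_mono : MonotoneOn u (Ici 0))
    (hu_bdd : ∀ t, 0 ≤ t → 0 ≤ u t ∧ u t ≤ δ)
    (hu_eq : ∀ t, 0 ≤ t → u t = ∫ s in (0:ℝ)..t, (t - s) ^ (-α) * g (u s)) :
    Tendsto u atTop (𝓝 δ) := by
  set w : ℝ → ℝ := fun t => u (max t 0) with hw
  have hwmono : Monotone w := fun s t hst =>
    hu_mono (le_max_right s 0) (le_max_right t 0) (max_le_max hst le_rfl)
  have hwbdd : BddAbove (range w) := ⟨δ, by rintro _ ⟨t, rfl⟩; exact (hu_bdd _ (le_max_right t 0)).2⟩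
  set L := ⨆ t, w t with hL
  have htend : Tendsto w atTop (𝓝 L) := tendsto_atTop_ciSup hwmono hwbdd
  have huw : u =ᶠ[atTop] w := by
    filter_upwards [eventually_ge_atTop (0:ℝ)] with t ht
    simp [hw, max_eq_left ht]
  have htendu : Tendsto u atTop (𝓝 L) := htend.congr' huw.symm
  have hL_le : L ≤ δ := ciSup_le fun t => (hu_bdd _ (le_max_right t 0)).2
  have hL0 : 0 ≤ L := le_trans (hu_bdd 0 le_rfl).1 (by simpa [hw] using le_ciSup hwbdd (0:ℝ))
  have husL : ∀ s, 0 ≤ s → u s ≤ L := by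
    intro s hs
    have := le_ciSup hwbdd s
    simpa [hw, max_eq_left hs] using this
  rcases eq_or_lt_of_le hL_le with h | h
  · rwa [h] at htendu
  exfalso
  set c := g L with hc
  have hcpos : 0 < c := hg_pos L hL0 h
  have key : ∀ t, 0 ≤ t → c / (1 - α) * t ^ (1 - α) ≤ δ := by
    intro t ht
    have hint1 : IntervalIntegrable (fun s => (t - s) ^ (-α)) volume 0 t := by
      have h0 : IntervalIntegrable (fun x : ℝ => x ^ (-α)) volume 0 t :=
        intervalIntegral.intervalIntegrable_rpow' (by linarith)
      simpa using (h0.comp_sub_left t).symm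
    have hgucont : ContinuousOn (fun s => g (u s)) (Icc 0 t) := by
      apply hg_cont.comp (hu_cont.mono (Icc_subset_Ici_self))
      intro s hs
      exact ⟨(hu_bdd s hs.1).1, (hu_bdd s hs.1).2⟩
    have hint2 : IntervalIntegrable (fun s => (t - s) ^ (-α) * g (u s)) volume 0 t :=
      hint1.mul_continuousOn (by rwa [uIcc_of_le ht])
    have hint3 : IntervalIntegrable (fun s => (t - s) ^ (-α) * c) volume 0 t :=
      hint1.mul_const c
    have hmono : ∀ s ∈ Icc 0 t, (t - s) ^ (-α) * c ≤ (t - s) ^ (-α) * g (u s) := by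
      intro s hs
      refine mul_le_mul_of_nonneg_left ?_ (Real.rpow_nonneg (by linarith [hs.2]) _)
      exact hg_anti ⟨(hu_bdd s hs.1).1, (hu_bdd s hs.1).2⟩ ⟨hL0, hL_le⟩ (husL s hs.1)
    have hle : (∫ s in (0:ℝ)..t, (t - s) ^ (-α) * c) ≤ u t := by
      rw [hu_eq t ht]
      exact intervalIntegral.integral_mono_on ht hint3 hint2 hmono
    have hcalc : (∫ s in (0:ℝ)..t, (t - s) ^ (-α) * c) = c / (1 - α) * t ^ (1 - α) := by
      rw [intervalIntegral.integral_mul_const]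
      have h1 : (∫ s in (0:ℝ)..t, (t - s) ^ (-α)) = ∫ x in (0:ℝ)..t, x ^ (-α) := by
        rw [intervalIntegral.integral_comp_sub_left (fun x : ℝ => x ^ (-α)) t]
        norm_num
      rw [h1, integral_rpow (Or.inl (by linarith))]
      have he : -α + 1 = 1 - α := by ring
      rw [he, Real.zero_rpow (by linarith)]
      ring
    have := (hu_bdd t ht).2
    linarith [hcalc ▸ hle]
  have hinf : Tendsto (fun t : ℝ => c / (1 - α) * t ^ (1 - α)) atTop atTop :=
    (tendsto_rpow_atTop (by linarith)).const_mul_atTop (div_pos hcpos (by linarith))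
  obtain ⟨t, htg, ht0⟩ := ((hinf.eventually_gt_atTop δ).and (eventually_ge_atTop (0:ℝ))).exists
  linarith [key t ht0]
end

section
/- Let 0 < α < 1, λ > 0, κ > 0, γ > 0 and M > 0. Let f : [0,∞) → [0,∞) be bounded measurable and let H : ℝ → ℝ be increasing and locally Lipschitz with H(x) = 0 for x ≤ 0. Define F_{α,λ}(t) = λ⁻¹ ∫₀ᵗ (t−s)^{−α} f(s) ds, r₊(s) = H(γ κ F_{α,λ}(s)), r₋(s) = H(γ κ F_{α,λ}(s) − κ ∫₀ˢ λ⁻¹ (s−u)^{−α} H(γ κ F_{α,λ}(u)) du), and MI₊(γ,t) = κ ∫₀ᵗ (1 + λ⁻¹ (t−s)^{−α}) (γ f(s) − r₋(s)) ds, MI₋(γ,t) = κ ∫₀ᵗ (1 + λ⁻¹ (t−s)^{−α}) (γ f(s) − r₊(s)) ds. Let r_γ : [0,M] → ℝ be a continuous solution of the impact Volterra equation r_γ(t) = H(κ ∫₀ᵗ λ⁻¹ (t−s)^{−α} (γ f(s) − r_γ(s)) ds) and MI(γ,t) = κ ∫₀ᵗ (1 + λ⁻¹ (t−s)^{−α})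 (γ f(s) − r_γ(s)) ds. Then for all t ∈ [0,M], r₋(t) ≤ r_γ(t) ≤ r₊(t), and consequently MI₋(γ,t) ≤ MI(γ,t) ≤ MI₊(γ,t). -/
open MeasureTheory Set Filter Topology

/-- Explicit bounds on the solution of the impact Volterra equation and on the
macroscopic market impact: `r₋ ≤ r_γ ≤ r₊` and hence `MI₋ ≤ MI ≤ MI₊`, where
`r₊(s) = H(γ κ F(s))`,
`r₋(s) = H(γ κ F(s) − κ ∫₀ˢ λ⁻¹ (s−u)^{−α} H(γ κ F(u)) du)`, and
`F(t) = λ⁻¹ ∫₀ᵗ (t−s)^{−α} f(s) ds`. -/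
theorem stmt_19
    (α lam κ γ M : ℝ) (hα0 : 0 < α) (hα1 : α < 1) (hlam : 0 < lam)
    (hκ : 0 < κ) (hγ : 0 < γ) (hM : 0 < M)
    (f : ℝ → ℝ) (hf_meas : Measurable f)
    (hf_nonneg : ∀ t, 0 ≤ t → 0 ≤ f t)
    (hf_bdd : ∃ C, ∀ t, 0 ≤ t → f t ≤ C)
    (H : ℝ → ℝ) (hH_mono : Monotone H) (hH_lip : LocallyLipschitz H)
    (hH_zero : ∀ x, x ≤ 0 → H x = 0)
    (F rp rm : ℝ → ℝ)
    (hF : ∀ t : ℝ, F t = lam⁻¹ * ∫ s in (0:ℝ)..t, (t - s) ^ (-α) * f s)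
    (hrp : ∀ t : ℝ, rp t = H (γ * κ * F t))
    (hrm : ∀ t : ℝ, rm t = H (γ * κ * F t -
      κ * ∫ u in (0:ℝ)..t, lam⁻¹ * (t - u) ^ (-α) * H (γ * κ * F u)))
    (r : ℝ → ℝ) (hr_cont : ContinuousOn r (Icc 0 M))
    (hr_eq : ∀ t ∈ Icc (0:ℝ) M,
      r t = H (κ * ∫ s in (0:ℝ)..t, lam⁻¹ * (t - s) ^ (-α) * (γ * f s - r s))) :
    ∀ t ∈ Icc (0:ℝ) M,
      (rm t ≤ r t ∧ r t ≤ rp t) ∧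
      (κ * (∫ s in (0:ℝ)..t, (1 + lam⁻¹ * (t - s) ^ (-α)) * (γ * f s - rp s))
          ≤ κ * ∫ s in (0:ℝ)..t, (1 + lam⁻¹ * (t - s) ^ (-α)) * (γ * f s - r s) ∧
        κ * (∫ s in (0:ℝ)..t, (1 + lam⁻¹ * (t - s) ^ (-α)) * (γ * f s - r s))
          ≤ κ * ∫ s in (0:ℝ)..t, (1 + lam⁻¹ * (t - s) ^ (-α)) * (γ * f s - rm s)) := by
  obtain ⟨C₀, hC₀⟩ := hf_bdd
  set C : ℝ := max C₀ 0 with hCdef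
  have hCnn : 0 ≤ C := le_max_right _ _
  have hfC : ∀ s : ℝ, 0 ≤ s → |f s| ≤ C := fun s hs => by
    rw [abs_of_nonneg (hf_nonneg s hs)]
    exact le_max_of_le_left (hC₀ s hs)
  have hH0 : ∀ x, 0 ≤ H x := by
    intro x
    rcases le_or_gt x 0 with h | h
    · rw [hH_zero x h]
    · rw [← hH_zero 0 le_rfl]; exact hH_mono h.le
  have hHcont : Continuous H := hH_lip.continuous
  have hneg : (-1 : ℝ) < -α := by linarith
  have hr0 : ∀ s ∈ Icc (0:ℝ) M, 0 ≤ r s := fun s hs => by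
    rw [hr_eq s hs]; exact hH0 _
  obtain ⟨R, hR⟩ := isCompact_Icc.exists_bound_of_continuousOn hr_cont
  -- weight integrability
  have w_ii : ∀ t : ℝ, IntervalIntegrable (fun s => (t - s) ^ (-α)) volume 0 t := fun t => by
    simpa using ((intervalIntegral.intervalIntegrable_rpow' (a := 0) (b := t) hneg).comp_sub_left t).symm
  have w_nonneg : ∀ t s : ℝ, s ≤ t → (0:ℝ) ≤ (t - s) ^ (-α) := fun t s hs =>
    Real.rpow_nonneg (by linarith) _
  -- value bound for the weight integral
  have w_int_le : ∀ t ∈ Icc (0:ℝ) M, (∫ s in (0:ℝ)..t, (t - s) ^ (-α)) ≤ M ^ (1 - α) / (1 - α) := by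
    intro t ht
    rw [intervalIntegral.integral_comp_sub_left (fun x => x ^ (-α)) t]
    simp only [sub_zero, sub_self]
    rw [integral_rpow (Or.inl hneg), Real.zero_rpow (by linarith : -α + 1 ≠ 0), sub_zero,
      show (1:ℝ) - α = -α + 1 from by ring]
    have h1 : t ^ (-α + 1) ≤ M ^ (-α + 1) := Real.rpow_le_rpow ht.1 ht.2 (by linarith)
    exact div_le_div_of_nonneg_right h1 (by linarith)
  -- master integrability lemmas
  have key_ii0 : ∀ t ∈ Icc (0:ℝ) M, ∀ (g : ℝ → ℝ) (D : ℝ),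
      AEStronglyMeasurable g (volume.restrict (Ioc 0 t)) → (∀ s ∈ Ioc (0:ℝ) t, |g s| ≤ D) →
      IntervalIntegrable g volume 0 t := by
    intro t ht g D hgm hgb
    rw [intervalIntegrable_iff_integrableOn_Ioc_of_le ht.1]
    refine ⟨hgm, HasFiniteIntegral.restrict_of_bounded (C := D) measure_Ioc_lt_top ?_⟩
    filter_upwards [self_mem_ae_restrict measurableSet_Ioc] with s hs
    simpa using hgb s hs
  have key_ii : ∀ t ∈ Icc (0:ℝ) M, ∀ (g : ℝ → ℝ) (D : ℝ),
      AEStronglyMeasurable g (volume.restrict (Ioc 0 t)) → (∀ s ∈ Ioc (0:ℝ) t, |g s| ≤ D) →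
      IntervalIntegrable (fun s => (t - s) ^ (-α) * g s) volume 0 t := by
    intro t ht g D hgm hgb
    have dom : IntervalIntegrable (fun s => D * (t - s) ^ (-α)) volume 0 t := (w_ii t).const_mul D
    apply dom.mono_fun
    · have hw : AEStronglyMeasurable (fun s => (t - s) ^ (-α)) (volume.restrict (Set.uIoc 0 t)) :=
        (by fun_prop : Measurable fun s : ℝ => (t - s) ^ (-α)).aestronglyMeasurable
      rw [Set.uIoc_of_le ht.1]
      exact ((by fun_prop : Measurable fun s : ℝ => (t - s) ^ (-α)).aestronglyMeasurable).mul hgm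
    · rw [Set.uIoc_of_le ht.1]
      filter_upwards [self_mem_ae_restrict measurableSet_Ioc] with s hs
      have h1 : (0:ℝ) ≤ (t - s) ^ (-α) := w_nonneg t s hs.2
      have h2 : |g s| ≤ D := hgb s hs
      rw [Real.norm_eq_abs, Real.norm_eq_abs, abs_mul, abs_of_nonneg h1, abs_mul,
        abs_of_nonneg h1]
      have hD : (0:ℝ) ≤ D := le_trans (abs_nonneg _) h2
      rw [abs_of_nonneg hD]
      calc (t - s) ^ (-α) * |g s| ≤ (t - s) ^ (-α) * D := by
            exact mul_le_mul_of_nonneg_left h2 h1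
        _ = D * (t - s) ^ (-α) := by ring
  -- measurable-on-[0,∞) versions of F, rp, rm
  have key_meas : ∀ g : ℝ → ℝ, Measurable g → Measurable
      (fun t => ∫ s, (Ioc (0:ℝ) t).indicator (fun s => (t - s) ^ (-α) * g s) s) := by
    intro g hg
    have hm : StronglyMeasurable (fun p : ℝ × ℝ =>
        (Ioc (0:ℝ) p.1).indicator (fun s => (p.1 - s) ^ (-α) * g s) p.2) := by
      apply Measurable.stronglyMeasurable
      have heq : (fun p : ℝ × ℝ => (Ioc (0:ℝ) p.1).indicator (fun s => (p.1 - s) ^ (-α) * g s) p.2)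
          = fun p : ℝ × ℝ => if p ∈ {q : ℝ × ℝ | 0 < q.2 ∧ q.2 ≤ q.1}
              then (p.1 - p.2) ^ (-α) * g p.2 else 0 := by
        ext p; simp [Set.indicator_apply, Set.mem_Ioc]
      rw [heq]
      refine Measurable.ite ?_ (by fun_prop) measurable_const
      exact (measurableSet_lt measurable_const measurable_snd).inter
        (measurableSet_le measurable_snd measurable_fst)
    exact hm.integral_prod_right'.measurable
  have key_eq : ∀ (g : ℝ → ℝ) (t : ℝ), 0 ≤ t →
      (∫ s in (0:ℝ)..t, (t - s) ^ (-α) * g s)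
        = ∫ s, (Ioc (0:ℝ) t).indicator (fun s => (t - s) ^ (-α) * g s) s := by
    intro g t ht
    rw [intervalIntegral.integral_of_le ht, ← MeasureTheory.integral_indicator measurableSet_Ioc]
  obtain ⟨Fi, hFi_meas, hFi_eq⟩ : ∃ Fi : ℝ → ℝ, Measurable Fi ∧ ∀ t, 0 ≤ t → F t = Fi t :=
    ⟨fun t => lam⁻¹ * ∫ s, (Ioc (0:ℝ) t).indicator (fun s => (t - s) ^ (-α) * f s) s,
      (key_meas f hf_meas).const_mul _, fun t ht => by rw [hF t, key_eq f t ht]⟩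
  obtain ⟨rpi, hrpi_meas, hrpi_eq⟩ : ∃ rpi : ℝ → ℝ, Measurable rpi ∧ ∀ t, 0 ≤ t → rp t = rpi t :=
    ⟨fun t => H (γ * κ * Fi t), hHcont.measurable.comp (hFi_meas.const_mul _),
      fun t ht => by rw [hrp t, hFi_eq t ht]⟩
  -- AE strongly measurable facts on Ioc 0 t
  have aesm_rp : ∀ t ∈ Icc (0:ℝ) M, AEStronglyMeasurable rp (volume.restrict (Ioc 0 t)) := by
    intro t ht
    refine (hrpi_meas.aestronglyMeasurable).congr ?_
    filter_upwards [self_mem_ae_restrict measurableSet_Ioc] with s hs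
    exact (hrpi_eq s hs.1.le).symm
  have aesm_r : ∀ t ∈ Icc (0:ℝ) M, AEStronglyMeasurable r (volume.restrict (Ioc 0 t)) := by
    intro t ht
    have : Ioc (0:ℝ) t ⊆ Icc 0 M := fun s hs => ⟨hs.1.le, hs.2.trans ht.2⟩
    exact ((hr_cont.mono this).aemeasurable measurableSet_Ioc).aestronglyMeasurable
  -- bound on F
  set B : ℝ := lam⁻¹ * (C * (M ^ (1 - α) / (1 - α))) with hBdef
  have hF_le : ∀ t ∈ Icc (0:ℝ) M, F t ≤ B := by
    intro t ht
    rw [hF t]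
    have h1 : (∫ s in (0:ℝ)..t, (t - s) ^ (-α) * f s)
        ≤ ∫ s in (0:ℝ)..t, C * (t - s) ^ (-α) := by
      apply intervalIntegral.integral_mono_on ht.1
        (key_ii t ht f C hf_meas.aestronglyMeasurable (fun s hs => hfC s hs.1.le))
        ((w_ii t).const_mul C)
      intro s hs
      have hw := w_nonneg t s hs.2
      calc (t - s) ^ (-α) * f s ≤ (t - s) ^ (-α) * C := by
            refine mul_le_mul_of_nonneg_left ?_ hw
            exact (abs_le.mp (hfC s hs.1)).2
        _ = C * (t - s) ^ (-α) := by ring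
    rw [intervalIntegral.integral_const_mul] at h1
    have h2 : C * (∫ s in (0:ℝ)..t, (t - s) ^ (-α)) ≤ C * (M ^ (1 - α) / (1 - α)) :=
      mul_le_mul_of_nonneg_left (w_int_le t ht) hCnn
    have := h1.trans h2
    exact mul_le_mul_of_nonneg_left this (inv_nonneg.mpr hlam.le)
  -- bounds on rp and rm
  have hrp_le : ∀ s ∈ Icc (0:ℝ) M, |rp s| ≤ H (γ * κ * B) := by
    intro s hs
    rw [hrp s, abs_of_nonneg (hH0 _)]
    exact hH_mono (mul_le_mul_of_nonneg_left (hF_le s hs) (mul_nonneg hγ.le hκ.le))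
  have hDinv : (0:ℝ) ≤ lam⁻¹ := inv_nonneg.mpr hlam.le
  have ii_wg : ∀ t ∈ Icc (0:ℝ) M, ∀ (g : ℝ → ℝ) (D : ℝ),
      AEStronglyMeasurable g (volume.restrict (Ioc 0 t)) → (∀ s ∈ Ioc (0:ℝ) t, |g s| ≤ D) →
      IntervalIntegrable (fun s => lam⁻¹ * (t - s) ^ (-α) * g s) volume 0 t := by
    intro t ht g D hgm hgb
    rw [show (fun s => lam⁻¹ * (t - s) ^ (-α) * g s)
      = fun s => (t - s) ^ (-α) * (lam⁻¹ * g s) from funext fun s => by ring]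
    refine key_ii t ht _ (lam⁻¹ * D) (aestronglyMeasurable_const.mul hgm) ?_
    intro s hs
    rw [abs_mul, abs_of_nonneg hDinv]
    exact mul_le_mul_of_nonneg_left (hgb s hs) hDinv
  have hrm_le : ∀ s ∈ Icc (0:ℝ) M, |rm s| ≤ H (γ * κ * B) := by
    intro s hs
    rw [hrm s, abs_of_nonneg (hH0 _)]
    have h2 : 0 ≤ κ * ∫ u in (0:ℝ)..s, lam⁻¹ * (s - u) ^ (-α) * H (γ * κ * F u) := by
      refine mul_nonneg hκ.le (intervalIntegral.integral_nonneg hs.1 ?_)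
      intro u hu
      exact mul_nonneg (mul_nonneg hDinv (w_nonneg s u hu.2)) (hH0 _)
    have h3 := mul_le_mul_of_nonneg_left (hF_le s hs) (mul_nonneg hγ.le hκ.le)
    exact hH_mono (by linarith)
  obtain ⟨rmi, hrmi_meas, hrmi_eq⟩ : ∃ rmi : ℝ → ℝ, Measurable rmi ∧ ∀ t, 0 ≤ t → rm t = rmi t := by
    refine ⟨fun t => H (γ * κ * Fi t
        - κ * (lam⁻¹ * ∫ s, (Ioc (0:ℝ) t).indicator (fun u => (t - u) ^ (-α) * rpi u) s)), ?_, ?_⟩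
    · exact hHcont.measurable.comp ((hFi_meas.const_mul _).sub
        (((key_meas rpi hrpi_meas).const_mul lam⁻¹).const_mul κ))
    · intro t ht
      rw [hrm t, hFi_eq t ht]
      have e2 : (∫ u in (0:ℝ)..t, lam⁻¹ * (t - u) ^ (-α) * H (γ * κ * F u))
          = lam⁻¹ * ∫ s, (Ioc (0:ℝ) t).indicator (fun u => (t - u) ^ (-α) * rpi u) s := by
        calc (∫ u in (0:ℝ)..t, lam⁻¹ * (t - u) ^ (-α) * H (γ * κ * F u))
            = ∫ u in (0:ℝ)..t, lam⁻¹ * ((t - u) ^ (-α) * rpi u) := by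
              rw [intervalIntegral.integral_of_le ht, intervalIntegral.integral_of_le ht]
              apply setIntegral_congr_fun measurableSet_Ioc
              intro u hu
              have hu' : H (γ * κ * F u) = rpi u := by rw [← hrpi_eq u hu.1.le, hrp u]
              show lam⁻¹ * (t - u) ^ (-α) * H (γ * κ * F u) = lam⁻¹ * ((t - u) ^ (-α) * rpi u)
              rw [hu']; ring
          _ = lam⁻¹ * ∫ u in (0:ℝ)..t, (t - u) ^ (-α) * rpi u :=
              intervalIntegral.integral_const_mul _ _
          _ = lam⁻¹ * ∫ s, (Ioc (0:ℝ) t).indicator (fun u => (t - u) ^ (-α) * rpi u) s := by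
              rw [key_eq rpi t ht]
      rw [e2]
  have aesm_rm : ∀ t ∈ Icc (0:ℝ) M, AEStronglyMeasurable rm (volume.restrict (Ioc 0 t)) := by
    intro t ht
    refine (hrmi_meas.aestronglyMeasurable).congr ?_
    filter_upwards [self_mem_ae_restrict measurableSet_Ioc] with s hs
    exact (hrmi_eq s hs.1.le).symm
  have e1 : ∀ t : ℝ, γ * κ * F t = κ * ∫ s in (0:ℝ)..t, lam⁻¹ * (t - s) ^ (-α) * (γ * f s) := by
    intro t
    rw [hF t,
      show (fun s => lam⁻¹ * (t - s) ^ (-α) * (γ * f s))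
        = fun s => (lam⁻¹ * γ) * ((t - s) ^ (-α) * f s) from funext fun s => by ring,
      intervalIntegral.integral_const_mul]
    ring
  -- step A : r ≤ rp
  have hA : ∀ t ∈ Icc (0:ℝ) M, r t ≤ rp t := by
    intro t ht
    rw [hr_eq t ht, hrp t]
    apply hH_mono
    rw [e1 t]
    refine mul_le_mul_of_nonneg_left ?_ hκ.le
    have ii1 : IntervalIntegrable (fun s => lam⁻¹ * (t - s) ^ (-α) * (γ * f s - r s)) volume 0 t := by
      rw [show (fun s => lam⁻¹ * (t - s) ^ (-α) * (γ * f s - r s))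
        = fun s => (t - s) ^ (-α) * (lam⁻¹ * (γ * f s - r s)) from funext fun s => by ring]
      refine key_ii t ht _ (lam⁻¹ * (γ * C + R)) ?_ ?_
      · exact (aestronglyMeasurable_const.mul
          (((hf_meas.const_mul γ).aestronglyMeasurable).sub (aesm_r t ht)))
      · intro s hs
        have hsM : s ∈ Icc (0:ℝ) M := ⟨hs.1.le, hs.2.trans ht.2⟩
        rw [abs_mul, abs_of_nonneg (inv_nonneg.mpr hlam.le)]
        refine mul_le_mul_of_nonneg_left ?_ (inv_nonneg.mpr hlam.le)
        calc |γ * f s - r s| ≤ |γ * f s| + |r s| := abs_sub _ _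
          _ ≤ γ * C + R := by
              refine add_le_add ?_ ?_
              · rw [abs_mul, abs_of_nonneg hγ.le]
                exact mul_le_mul_of_nonneg_left (hfC s hs.1.le) hγ.le
              · simpa [Real.norm_eq_abs] using hR s hsM
    have ii2 : IntervalIntegrable (fun s => lam⁻¹ * (t - s) ^ (-α) * (γ * f s)) volume 0 t := by
      rw [show (fun s => lam⁻¹ * (t - s) ^ (-α) * (γ * f s))
        = fun s => (t - s) ^ (-α) * (lam⁻¹ * (γ * f s)) from funext fun s => by ring]
      refine key_ii t ht _ (lam⁻¹ * (γ * C)) (((hf_meas.const_mul γ).const_mul lam⁻¹).aestronglyMeasurable) ?_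
      intro s hs
      rw [abs_mul, abs_of_nonneg (inv_nonneg.mpr hlam.le), abs_mul, abs_of_nonneg hγ.le]
      refine mul_le_mul_of_nonneg_left
        (mul_le_mul_of_nonneg_left (hfC s hs.1.le) hγ.le) (inv_nonneg.mpr hlam.le)
    apply intervalIntegral.integral_mono_on ht.1 ii1 ii2
    intro s hs
    have hsM : s ∈ Icc (0:ℝ) M := ⟨hs.1, hs.2.trans ht.2⟩
    have hw : (0:ℝ) ≤ lam⁻¹ * (t - s) ^ (-α) :=
      mul_nonneg (inv_nonneg.mpr hlam.le) (w_nonneg t s hs.2)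
    exact mul_le_mul_of_nonneg_left (by linarith [hr0 s hsM]) hw
  -- step B : rm ≤ r
  have hB : ∀ t ∈ Icc (0:ℝ) M, rm t ≤ r t := by
    intro t ht
    rw [hrm t, hr_eq t ht]
    apply hH_mono
    have bnd_f : ∀ s ∈ Ioc (0:ℝ) t, |γ * f s| ≤ γ * C := by
      intro s hs
      rw [abs_mul, abs_of_nonneg hγ.le]
      exact mul_le_mul_of_nonneg_left (hfC s hs.1.le) hγ.le
    have ii_f : IntervalIntegrable (fun s => lam⁻¹ * (t - s) ^ (-α) * (γ * f s)) volume 0 t :=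
      ii_wg t ht _ (γ * C) ((hf_meas.const_mul γ).aestronglyMeasurable) bnd_f
    have ii_rp : IntervalIntegrable (fun s => lam⁻¹ * (t - s) ^ (-α) * rp s) volume 0 t :=
      ii_wg t ht rp (H (γ * κ * B)) (aesm_rp t ht)
        (fun s hs => hrp_le s ⟨hs.1.le, hs.2.trans ht.2⟩)
    have aesm_sub_rp : AEStronglyMeasurable (fun s => γ * f s - rp s)
        (volume.restrict (Ioc 0 t)) :=
      ((hf_meas.const_mul γ).aestronglyMeasurable).sub (aesm_rp t ht)
    have aesm_sub_r : AEStronglyMeasurable (fun s => γ * f s - r s)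
        (volume.restrict (Ioc 0 t)) :=
      ((hf_meas.const_mul γ).aestronglyMeasurable).sub (aesm_r t ht)
    have bnd_sub_rp : ∀ s ∈ Ioc (0:ℝ) t, |γ * f s - rp s| ≤ γ * C + H (γ * κ * B) := by
      intro s hs
      calc |γ * f s - rp s| ≤ |γ * f s| + |rp s| := abs_sub _ _
        _ ≤ γ * C + H (γ * κ * B) :=
            add_le_add (bnd_f s hs) (hrp_le s ⟨hs.1.le, hs.2.trans ht.2⟩)
    have bnd_sub_r : ∀ s ∈ Ioc (0:ℝ) t, |γ * f s - r s| ≤ γ * C + R := by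
      intro s hs
      calc |γ * f s - r s| ≤ |γ * f s| + |r s| := abs_sub _ _
        _ ≤ γ * C + R := add_le_add (bnd_f s hs)
            (by simpa [Real.norm_eq_abs] using hR s ⟨hs.1.le, hs.2.trans ht.2⟩)
    have ii_sub_rp : IntervalIntegrable (fun s => lam⁻¹ * (t - s) ^ (-α) * (γ * f s - rp s))
        volume 0 t := ii_wg t ht _ (γ * C + H (γ * κ * B)) aesm_sub_rp bnd_sub_rp
    have ii_sub_r : IntervalIntegrable (fun s => lam⁻¹ * (t - s) ^ (-α) * (γ * f s - r s))
        volume 0 t := ii_wg t ht _ (γ * C + R) aesm_sub_r bnd_sub_r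
    have ekey : γ * κ * F t - κ * (∫ u in (0:ℝ)..t, lam⁻¹ * (t - u) ^ (-α) * H (γ * κ * F u))
        = κ * ∫ s in (0:ℝ)..t, lam⁻¹ * (t - s) ^ (-α) * (γ * f s - rp s) := by
      rw [show (fun s => lam⁻¹ * (t - s) ^ (-α) * (γ * f s - rp s))
          = fun s => lam⁻¹ * (t - s) ^ (-α) * (γ * f s) - lam⁻¹ * (t - s) ^ (-α) * rp s
          from funext fun s => by ring,
        intervalIntegral.integral_sub ii_f ii_rp,
        show (fun u => lam⁻¹ * (t - u) ^ (-α) * H (γ * κ * F u))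
          = fun u => lam⁻¹ * (t - u) ^ (-α) * rp u from funext fun u => by rw [hrp u],
        e1 t]
      ring
    rw [ekey]
    refine mul_le_mul_of_nonneg_left ?_ hκ.le
    apply intervalIntegral.integral_mono_on ht.1 ii_sub_rp ii_sub_r
    intro s hs
    have hsM : s ∈ Icc (0:ℝ) M := ⟨hs.1, hs.2.trans ht.2⟩
    have hw : (0:ℝ) ≤ lam⁻¹ * (t - s) ^ (-α) := mul_nonneg hDinv (w_nonneg t s hs.2)
    exact mul_le_mul_of_nonneg_left (by linarith [hA s hsM]) hw
  -- final assembly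
  intro t ht
  have ii_c : ∀ (g : ℝ → ℝ) (D : ℝ),
      AEStronglyMeasurable g (volume.restrict (Ioc 0 t)) → (∀ s ∈ Icc (0:ℝ) M, |g s| ≤ D) →
      IntervalIntegrable (fun s => (1 + lam⁻¹ * (t - s) ^ (-α)) * (γ * f s - g s)) volume 0 t := by
    intro g D hgm hgb
    have hgb' : ∀ s ∈ Ioc (0:ℝ) t, |γ * f s - g s| ≤ γ * C + D := by
      intro s hs
      calc |γ * f s - g s| ≤ |γ * f s| + |g s| := abs_sub _ _
        _ ≤ γ * C + D := by
            refine add_le_add ?_ (hgb s ⟨hs.1.le, hs.2.trans ht.2⟩)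
            rw [abs_mul, abs_of_nonneg hγ.le]
            exact mul_le_mul_of_nonneg_left (hfC s hs.1.le) hγ.le
    have aesm_g : AEStronglyMeasurable (fun s => γ * f s - g s) (volume.restrict (Ioc 0 t)) :=
      ((hf_meas.const_mul γ).aestronglyMeasurable).sub hgm
    have h1 : IntervalIntegrable (fun s => γ * f s - g s) volume 0 t :=
      key_ii0 t ht _ (γ * C + D) aesm_g hgb'
    have h2 : IntervalIntegrable (fun s => lam⁻¹ * (t - s) ^ (-α) * (γ * f s - g s)) volume 0 t :=
      ii_wg t ht _ (γ * C + D) aesm_g hgb'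
    rw [show (fun s => (1 + lam⁻¹ * (t - s) ^ (-α)) * (γ * f s - g s))
      = fun s => (γ * f s - g s) + lam⁻¹ * (t - s) ^ (-α) * (γ * f s - g s)
      from funext fun s => by ring]
    exact h1.add h2
  have hrabs : ∀ s ∈ Icc (0:ℝ) M, |r s| ≤ R := fun s hs => by
    simpa [Real.norm_eq_abs] using hR s hs
  have iic_rp := ii_c rp (H (γ * κ * B)) (aesm_rp t ht) hrp_le
  have iic_r := ii_c r R (aesm_r t ht) hrabs
  have iic_rm := ii_c rm (H (γ * κ * B)) (aesm_rm t ht) hrm_le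
  refine ⟨⟨hB t ht, hA t ht⟩, ?_, ?_⟩
  · refine mul_le_mul_of_nonneg_left ?_ hκ.le
    apply intervalIntegral.integral_mono_on ht.1 iic_rp iic_r
    intro s hs
    have hsM : s ∈ Icc (0:ℝ) M := ⟨hs.1, hs.2.trans ht.2⟩
    have hw : (0:ℝ) ≤ 1 + lam⁻¹ * (t - s) ^ (-α) :=
      add_nonneg zero_le_one (mul_nonneg hDinv (w_nonneg t s hs.2))
    exact mul_le_mul_of_nonneg_left (by linarith [hA s hsM]) hw
  · refine mul_le_mul_of_nonneg_left ?_ hκ.le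
    apply intervalIntegral.integral_mono_on ht.1 iic_r iic_rm
    intro s hs
    have hsM : s ∈ Icc (0:ℝ) M := ⟨hs.1, hs.2.trans ht.2⟩
    have hw : (0:ℝ) ≤ 1 + lam⁻¹ * (t - s) ^ (-α) :=
      add_nonneg zero_le_one (mul_nonneg hDinv (w_nonneg t s hs.2))
    exact mul_le_mul_of_nonneg_left (by linarith [hB s hsM]) hw
end
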